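/- arXiv:1709.00238 — 4 statements merged into one kernel-verified Lean document; each statement's English description precedes it below -/
import Mathlib

section
/- For a function f holomorphic on the punctured unit disk belonging to A²(𝔻*, |z|²) with Laurent expansion f(z) = Σ_{k≥-1} a_k z^k, the coefficient a_1 satisfies |a_1| ≤ (5/(2π)) ∫_{𝔻*} |f(z)| |z|² dA(z). -/
open MeasureTheory Complex Real Set Filter

noncomputable def rho (n : ℕ) : ℝ := 1 - 1/(n+2)

lemma rho_pos (n : ℕ) : 0 < rho n := by
  have : 1/((n:ℝ)+2) ≤ 1/2 := by
    apply one_div_le_one_div_of_le <;> [norm_num; (push_cast; linarith [Nat.cast_nonneg (α := ℝ) n])]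
  unfold rho; linarith

lemma rho_lt_one (n : ℕ) : rho n < 1 := by
  have : 0 < 1/((n:ℝ)+2) := by positivity
  unfold rho; linarith

lemma rho_mono : Monotone rho := by
  intro n m hnm
  unfold rho
  have : 1/((m:ℝ)+2) ≤ 1/((n:ℝ)+2) := by
    apply one_div_le_one_div_of_le
    · positivity
    · push_cast; exact_mod_cast by linarith [(Nat.cast_le (α := ℝ)).2 hnm]
  linarith

lemma rho_tendsto : Tendsto rho atTop (nhds 1) := by
  have h1 : Tendsto (fun n : ℕ => 1/((n:ℝ)+2)) atTop (nhds 0) := by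
    simp only [one_div]
    exact Tendsto.comp tendsto_inv_atTop_zero
      (tendsto_atTop_add_const_right _ _ tendsto_natCast_atTop_atTop)
  have h2 : Tendsto (fun _ : ℕ => (1:ℝ)) atTop (nhds 1) := tendsto_const_nhds
  unfold rho
  simpa [one_div] using h2.sub h1

lemma ang_int (m : ℤ) :
    ∫ θ in Ioo (-π) π, Complex.exp (m * θ * Complex.I) =
      if m = 0 then (2 * π : ℂ) else 0 := by
  rw [← integral_Ioc_eq_integral_Ioo,
    ← intervalIntegral.integral_of_le (by linarith [Real.pi_pos] : -π ≤ π)]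
  by_cases hm : m = 0
  · simp [hm, two_mul]
  · rw [if_neg hm]
    have hc : ((m : ℂ) * Complex.I) ≠ 0 := by
      simp [Complex.I_ne_zero, hm]
    have h1 : ∀ θ : ℝ, (m : ℂ) * θ * Complex.I = ((m : ℂ) * Complex.I) * θ := by
      intro θ; ring
    simp_rw [h1]
    rw [integral_exp_mul_complex hc]
    have h2 : Complex.exp ((m : ℂ) * Complex.I * π) = Complex.exp ((m : ℂ) * Complex.I * (-π)) := by
      rw [Complex.exp_eq_exp_iff_exists_int]
      refine ⟨m, ?_⟩
      push_cast
      ring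
    rw [h2, Complex.ofReal_neg, sub_self, zero_div]

lemma rad_int (n : ℕ) {ρ : ℝ} (h : 0 ≤ ρ) :
    ∫ r in Ioo 0 ρ, ((r : ℂ)) ^ n = ((ρ ^ (n + 1) / (n + 1) : ℝ) : ℂ) := by
  rw [← integral_Ioc_eq_integral_Ioo, ← intervalIntegral.integral_of_le h]
  have : ∀ r : ℝ, ((r : ℂ)) ^ n = ((r ^ n : ℝ) : ℂ) := by intro r; push_cast; ring
  simp_rw [this]
  rw [intervalIntegral.integral_ofReal, integral_pow]
  norm_num

lemma Lval (k : ℤ) {ρ : ℝ} (hρ : 0 < ρ) :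
    ∫ z in {z : ℂ | 0 < ‖z‖ ∧ ‖z‖ < ρ},
      z ^ k * (starRingEnd ℂ) z * (‖z‖ : ℂ) =
    if k = 1 then ((2 * π * ρ ^ 5 / 5 : ℝ) : ℂ) else 0 := by
  set G : ℂ → ℂ := fun z => z ^ k * (starRingEnd ℂ) z * (‖z‖ : ℂ) with hG
  have hSmeas : MeasurableSet {z : ℂ | 0 < ‖z‖ ∧ ‖z‖ < ρ} := by
    have : {z : ℂ | 0 < ‖z‖ ∧ ‖z‖ < ρ} = (fun z : ℂ => ‖z‖) ⁻¹' (Ioo 0 ρ) := rfl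
    rw [this]
    exact (isOpen_Ioo.preimage continuous_norm).measurableSet
  rw [← integral_indicator hSmeas, ← Complex.integral_comp_polarCoord_symm]
  have key : ∀ p ∈ polarCoord.target,
      p.1 • Set.indicator {z : ℂ | 0 < ‖z‖ ∧ ‖z‖ < ρ} G
        (Complex.polarCoord.symm p) =
      Set.indicator (Ioo (0:ℝ) ρ ×ˢ Ioo (-π) π)
        (fun p : ℝ × ℝ => ((p.1 : ℂ)) ^ (k + 3) * Complex.exp (((k : ℂ) - 1) * p.2 * Complex.I)) p := by
    rintro ⟨r, θ⟩ ⟨hr, hθ⟩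
    simp only [polarCoord_target, mem_prod, mem_Ioi] at hr hθ
    have habs : ‖Complex.polarCoord.symm (r, θ)‖ = r := by
      rw [Complex.norm_polarCoord_symm, abs_of_pos hr]
    have hsymm : Complex.polarCoord.symm (r, θ) = (r : ℂ) * Complex.exp (θ * Complex.I) := by
      rw [Complex.polarCoord_symm_apply, Complex.exp_mul_I]
      norm_num [Complex.ofReal_cos, Complex.ofReal_sin]
    rw [hsymm] at habs
    by_cases hlt : r < ρ
    · rw [Set.indicator_of_mem, Set.indicator_of_mem]
      · have hrne : (r : ℂ) ≠ 0 := by exact_mod_cast hr.ne'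
        rw [hG]
        simp only [hsymm]
        rw [real_smul]
        rw [map_mul, Complex.conj_ofReal, ← Complex.exp_conj]
        have hconj : (starRingEnd ℂ) ((θ : ℂ) * Complex.I) = -((θ:ℂ) * Complex.I) := by
          simp [Complex.conj_ofReal]
        rw [hconj, mul_zpow, ← Complex.exp_int_mul, habs]
        skip
        rw [show (k + 3 : ℤ) = k + (3:ℕ) by norm_num, zpow_add₀ hrne, zpow_natCast]
        have hexp : Complex.exp ((k:ℂ) * ((θ:ℂ) * Complex.I)) * Complex.exp (-((θ:ℂ) * Complex.I))
            = Complex.exp (((k:ℂ) - 1) * (θ:ℂ) * Complex.I) := by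
          rw [← Complex.exp_add]; congr 1; ring
        rw [← hexp]
        ring
      · exact ⟨⟨hr, hlt⟩, hθ⟩
      · rw [hsymm]  -- membership in S
        constructor <;> simp [Complex.norm_exp, abs_of_pos hr, hlt, hr]
    · rw [Set.indicator_of_notMem, Set.indicator_of_notMem, smul_zero]
      · rintro ⟨⟨_, h2⟩, _⟩; exact hlt h2
      · intro hmem
        rw [mem_setOf_eq, hsymm, habs] at hmem
        exact hlt hmem.2
  rw [setIntegral_congr_fun polarCoord.open_target.measurableSet key,
    setIntegral_indicator (measurableSet_Ioo.prod measurableSet_Ioo),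
    inter_eq_self_of_subset_right (by
      rw [polarCoord_target]
      exact Set.prod_mono Ioo_subset_Ioi_self (subset_refl _)),
    Measure.volume_eq_prod,
    setIntegral_prod_mul (μ := volume) (ν := volume) (fun r : ℝ => ((r:ℂ))^(k+3))
      (fun θ : ℝ => Complex.exp (((k:ℂ)-1) * θ * Complex.I))]
  rw [show ((k:ℂ) - 1) = ((k - 1 : ℤ) : ℂ) by push_cast; ring, ang_int (k - 1)]
  by_cases hk : k = 1
  · subst hk
    rw [if_pos rfl, if_pos (show (1:ℤ) - 1 = 0 by norm_num)]
    have h4 : ∀ x : ℝ, ((x:ℂ)) ^ ((1:ℤ)+3) = ((x:ℂ))^(4:ℕ) := fun x => by norm_num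
    simp_rw [h4]
    rw [rad_int 4 hρ.le]
    push_cast
    ring
  · rw [if_neg (by omega), if_neg hk, mul_zero]

lemma Smeas (ρ : ℝ) : MeasurableSet {z : ℂ | 0 < ‖z‖ ∧ ‖z‖ < ρ} :=
  (isOpen_Ioo.preimage continuous_norm).measurableSet

lemma Ssub (ρ : ℝ) : {z : ℂ | 0 < ‖z‖ ∧ ‖z‖ < ρ} ⊆ Metric.ball 0 ρ := by
  intro z hz
  simpa [Complex.dist_eq] using hz.2

/-- Coefficient bound for Laurent coefficient of functions in the weighted
Bergman space $A^2(\mathbb{D}^*, |z|^2)$. -/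
theorem stmt_2 (D : Set ℂ) (hD : D = {z : ℂ | 0 < ‖z‖ ∧ ‖z‖ < 1})
    (f : ℂ → ℂ) (a : ℤ → ℂ)
    (hf : DifferentiableOn ℂ f D)
    (hL2 : Integrable (fun z => ‖f z‖ ^ 2 * ‖z‖ ^ 2) (volume.restrict D))
    (ha : ∀ k : ℤ, k < -1 → a k = 0)
    (hsum : ∀ z ∈ D, HasSum (fun k : ℤ => a k * z ^ k) (f z)) :
    ‖a (1)‖ ≤ (5 / (2 * π)) * ∫ z in D, ‖f z‖ * ‖z‖ ^ 2 := by
  subst hD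
  set D : Set ℂ := {z : ℂ | 0 < ‖z‖ ∧ ‖z‖ < 1} with hD
  set h : ℂ → ℂ := fun z => (starRingEnd ℂ) z * (‖z‖ : ℂ) with hh
  have hDmeas : MeasurableSet D := Smeas 1
  have hDfin : volume D < ⊤ :=
    lt_of_le_of_lt (measure_mono (Ssub 1)) measure_ball_lt_top
  have hnorm : ∀ z : ℂ, ‖f z * h z‖ = ‖f z‖ * ‖z‖ ^ 2 := by
    intro z
    simp only [hh, norm_mul, map_mul, Complex.norm_conj, Complex.norm_real,
      norm_norm, sq]
  -- integrability of f * h on D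
  have hint : IntegrableOn (fun z => f z * h z) D volume := by
    have hmeas : AEStronglyMeasurable (fun z => f z * h z) (volume.restrict D) := by
      apply ContinuousOn.aestronglyMeasurable _ hDmeas
      apply ContinuousOn.mul (hf.continuousOn)
      apply Continuous.continuousOn
      exact (Complex.continuous_conj).mul (Complex.continuous_ofReal.comp continuous_norm)
    have hg0 : Integrable
        (fun z => (‖f z‖ ^ 2 * ‖z‖ ^ 2 + 1) / 2) (volume.restrict D) := by
      exact (hL2.add (integrableOn_const (C := (1:ℝ)) hDfin.ne)).div_const 2
    apply hg0.mono' hmeas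
    filter_upwards [ae_restrict_mem hDmeas] with z hz
    rw [hnorm z]
    have hz1 : ‖z‖ < 1 := hz.2
    have h0 : (0:ℝ) ≤ ‖f z‖ := norm_nonneg _
    have h1 : (0:ℝ) ≤ ‖z‖ := norm_nonneg _
    nlinarith [sq_nonneg (‖f z‖ * ‖z‖ - 1),
      mul_nonneg h0 (mul_nonneg h1 (by linarith : (0:ℝ) ≤ 1 - ‖z‖))]
  -- the key identity
  have key : ∫ z in D, f z * h z = a 1 * ((2 * π / 5 : ℝ) : ℂ) := by
    set S : ℕ → Set ℂ := fun n => {z : ℂ | 0 < ‖z‖ ∧ ‖z‖ < rho n} with hS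
    have hSsubD : ∀ n, S n ⊆ D := by
      intro n z hz
      exact ⟨hz.1, hz.2.trans (rho_lt_one n)⟩
    have hUnion : ⋃ n, S n = D := by
      ext z
      simp only [mem_iUnion, hS, mem_setOf_eq, hD]
      constructor
      · rintro ⟨n, h1, h2⟩; exact ⟨h1, h2.trans (rho_lt_one n)⟩
      · rintro ⟨h1, h2⟩
        obtain ⟨m, hm⟩ := exists_nat_gt (1 / (1 - ‖z‖))
        refine ⟨m, h1, ?_⟩
        have hpos : 0 < 1 - ‖z‖ := by linarith
        have h3 : 1 < (m : ℝ) * (1 - ‖z‖) := (div_lt_iff₀ hpos).mp hm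
        have h4 : 1 / ((m : ℝ) + 2) < 1 - ‖z‖ := by
          rw [div_lt_iff₀ (by positivity)]
          nlinarith
        unfold rho
        linarith
    have heval : ∀ n, ∫ z in S n, f z * h z =
        a 1 * ((2 * π * (rho n) ^ 5 / 5 : ℝ) : ℂ) := by
      intro n
      have hρ0 := rho_pos n
      have hρ1 := rho_lt_one n
      set F : ℤ → ℂ → ℂ := fun k z => a k * z ^ k * h z with hF
      -- summability of coefficients at radius rho n
      have hmemρ : ((rho n : ℝ) : ℂ) ∈ D := by
        simp only [hD, mem_setOf_eq, Complex.norm_of_nonneg hρ0.le]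
        exact ⟨hρ0, hρ1⟩
      have hsummable : Summable (fun k : ℤ => ‖a k‖ * (rho n) ^ k) := by
        have h1 := ((hsum _ hmemρ).summable)
        rw [← summable_norm_iff] at h1
        convert h1 using 2 with k
        rw [norm_mul, norm_zpow, Complex.norm_real, Real.norm_of_nonneg hρ0.le]
      -- pointwise bound
      have hzpow_le : ∀ k : ℤ, -1 ≤ k → ∀ z ∈ S n,
          ‖z‖ ^ k * ‖z‖ ^ (2:ℕ) ≤ (rho n) ^ k * (rho n) ^ (2:ℕ) := by
        intro k hk z hz
        have hz0 : 0 < ‖z‖ := hz.1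
        have hzρ : ‖z‖ ≤ rho n := hz.2.le
        have e1 : ‖z‖ ^ k * ‖z‖ ^ (2:ℕ) = ‖z‖ ^ (k + 2) := by
          rw [← zpow_natCast (‖z‖) 2, ← zpow_add₀ hz0.ne']
          norm_num
        have e2 : (rho n) ^ k * (rho n) ^ (2:ℕ) = (rho n) ^ (k + 2) := by
          rw [← zpow_natCast (rho n) 2, ← zpow_add₀ hρ0.ne']
          norm_num
        rw [e1, e2]
        have hk2 : (0:ℤ) ≤ k + 2 := by omega
        obtain ⟨m, hm⟩ := Int.eq_ofNat_of_zero_le hk2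
        rw [hm, zpow_natCast, zpow_natCast]
        exact pow_le_pow_left₀ hz0.le hzρ m
      have hnormF : ∀ k : ℤ, ∀ z : ℂ,
          ‖F k z‖ = ‖a k‖ * (‖z‖ ^ k * ‖z‖ ^ (2:ℕ)) := by
        intro k z
        rw [hF]
        simp only [norm_mul, norm_zpow, map_zpow₀, hh, map_mul, Complex.norm_conj,
          Complex.norm_real, norm_norm]
        ring
      have hFle : ∀ k : ℤ, ∀ z ∈ S n, ‖F k z‖ ≤ ‖a k‖ * ((rho n) ^ k * (rho n) ^ (2:ℕ)) := by
        intro k z hz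
        by_cases hk : -1 ≤ k
        · rw [hnormF]
          have := hzpow_le k hk z hz
          have h0 : (0:ℝ) ≤ ‖a k‖ := norm_nonneg _
          exact mul_le_mul_of_nonneg_left this h0
        · rw [hF]
          simp only [ha k (by omega), zero_mul, norm_zero]
          positivity
      have hSnfin : volume (S n) < ⊤ :=
        lt_of_le_of_lt (measure_mono ((Ssub (rho n)))) measure_ball_lt_top
      -- integrability of each term
      have hFint : ∀ k : ℤ, Integrable (F k) (volume.restrict (S n)) := by
        intro k
        have hmeasF : AEStronglyMeasurable (F k) (volume.restrict (S n)) := by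
          apply ContinuousOn.aestronglyMeasurable _ (Smeas (rho n))
          apply ContinuousOn.mul _ (Continuous.continuousOn
            ((Complex.continuous_conj).mul
              (Complex.continuous_ofReal.comp continuous_norm)))
          apply ContinuousOn.mul continuousOn_const
          intro z hz
          have hzne : z ≠ 0 := by
            intro h0
            rw [h0] at hz
            simp at hz
          exact (continuousAt_zpow₀ z k (Or.inl hzne)).continuousWithinAt
        apply Integrable.mono'
          (integrableOn_const (C := ‖a k‖ * ((rho n) ^ k * (rho n) ^ (2:ℕ))) hSnfin.ne)
          hmeasF
        filter_upwards [ae_restrict_mem (Smeas (rho n))] with z hz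
        exact hFle k z hz
      -- summability of the integrals of norms
      have hInorm : Summable (fun k : ℤ => ∫ z in S n, ‖F k z‖) := by
        have hsb : Summable (fun k : ℤ =>
            (volume (S n)).toReal * (‖a k‖ * ((rho n) ^ k * (rho n) ^ (2:ℕ)))) := by
          have h2 : Summable (fun k : ℤ => ‖a k‖ * ((rho n) ^ k * (rho n) ^ (2:ℕ))) := by
            simpa [mul_assoc] using hsummable.mul_right ((rho n) ^ (2:ℕ))
          exact h2.mul_left _
        apply Summable.of_nonneg_of_le
          (fun k => integral_nonneg fun z => norm_nonneg _) (fun k => ?_) hsb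
        calc ∫ z in S n, ‖F k z‖
              ≤ ∫ _z in S n, ‖a k‖ * ((rho n) ^ k * (rho n) ^ (2:ℕ)) := by
                apply setIntegral_mono_on (hFint k).norm
                  (integrableOn_const (C := ‖a k‖ * ((rho n) ^ k * (rho n) ^ (2:ℕ))) hSnfin.ne) (Smeas (rho n))
                exact fun z hz => hFle k z hz
            _ = (volume (S n)).toReal * (‖a k‖ * ((rho n) ^ k * (rho n) ^ (2:ℕ))) := by
                rw [setIntegral_const, smul_eq_mul, measureReal_def]
      -- term-by-term integration
      have hHasSum := hasSum_integral_of_summable_integral_norm hFint hInorm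
      have htsum : ∫ z in S n, ∑' k : ℤ, F k z = ∫ z in S n, f z * h z := by
        apply setIntegral_congr_fun (Smeas (rho n))
        intro z hz
        exact ((hsum z (hSsubD n hz)).mul_right (h z)).tsum_eq
      rw [htsum] at hHasSum
      have hterm : (fun k : ℤ => ∫ z in S n, F k z) =
          fun k : ℤ => if k = 1 then a 1 * ((2 * π * (rho n) ^ 5 / 5 : ℝ) : ℂ) else 0 := by
        funext k
        have e1 : ∀ z : ℂ, F k z = a k * (z ^ k * (starRingEnd ℂ) z * (‖z‖ : ℂ)) := by
          intro z
          rw [hF, hh]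
          ring
        simp_rw [e1]
        rw [integral_const_mul, Lval k hρ0]
        by_cases hk : k = 1
        · subst hk; simp
        · simp [hk]
      rw [hterm] at hHasSum
      exact (hasSum_ite_eq (1:ℤ) _).unique hHasSum |>.symm
    -- take the limit
    have htend1 : Tendsto (fun n => ∫ z in S n, f z * h z) atTop
        (nhds (∫ z in D, f z * h z)) := by
      have hmono : Monotone S := by
        intro i j hij z hz
        exact ⟨hz.1, lt_of_lt_of_le hz.2 (rho_mono hij)⟩
      have := tendsto_setIntegral_of_monotone (fun i => Smeas (rho i)) hmono
        (by rw [hUnion]; exact hint)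
      rwa [hUnion] at this
    have htend2 : Tendsto (fun n => a 1 * ((2 * π * (rho n) ^ 5 / 5 : ℝ) : ℂ)) atTop
        (nhds (a 1 * ((2 * π / 5 : ℝ) : ℂ))) := by
      have h1 : Tendsto (fun n => (2 * π * (rho n) ^ 5 / 5 : ℝ)) atTop (nhds (2 * π / 5)) := by
        have h2 := ((rho_tendsto.pow 5).const_mul (2 * π)).div_const 5
        simpa using h2
      exact ((Complex.continuous_ofReal.tendsto _).comp h1).const_mul _
    rw [← funext heval] at htend2
    exact tendsto_nhds_unique htend1 htend2
  -- conclusion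
  have hbound : ‖∫ z in D, f z * h z‖ ≤ ∫ z in D, ‖f z‖ * ‖z‖ ^ 2 := by
    calc ‖∫ z in D, f z * h z‖ ≤ ∫ z in D, ‖f z * h z‖ := norm_integral_le_integral_norm _
    _ = ∫ z in D, ‖f z‖ * ‖z‖ ^ 2 := by
        exact integral_congr_ae (Eventually.of_forall fun z => hnorm z)
  rw [key] at hbound
  have hval : ‖a 1 * ((2 * π / 5 : ℝ) : ℂ)‖ = ‖a 1‖ * (2 * π / 5) := by
    rw [norm_mul, Complex.norm_real, Real.norm_of_nonneg (by positivity)]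
  rw [hval] at hbound
  have hπ : 0 < π := Real.pi_pos
  rw [div_mul_eq_mul_div, le_div_iff₀ (by positivity)]
  linarith
end

section
/- With F the Friedrichs operator on A²(𝔻*, |z|²) as above, there exists for each p ∈ [2, 4) a constant C_p such that ‖F(g)‖_{L^p(𝔻*, |z|² dA)} ≤ C_p ∫_{𝔻*} |g(z)| |z|² dA(z) for all g ∈ A²(𝔻*, |z|²); in particular F maps A²(𝔻*, |z|²) boundedly into A^p(𝔻*, |z|²). -/
open MeasureTheory Complex Real Set

theorem my_lintegral_comp_polarCoord_symm (f : ℝ × ℝ → ENNReal) :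
    (∫⁻ p in polarCoord.target, ENNReal.ofReal p.1 * f (polarCoord.symm p)) = ∫⁻ p, f p := by
  set B : ℝ × ℝ → ℝ × ℝ →L[ℝ] ℝ × ℝ := fun p =>
    LinearMap.toContinuousLinearMap (Matrix.toLin (Module.Basis.finTwoProd ℝ) (Module.Basis.finTwoProd ℝ)
      !![Real.cos p.2, -p.1 * Real.sin p.2; Real.sin p.2, p.1 * Real.cos p.2])
  have A : ∀ p ∈ polarCoord.target, HasFDerivWithinAt polarCoord.symm (B p) polarCoord.target p :=
    fun p _ => (hasFDerivAt_polarCoord_symm p).hasFDerivWithinAt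
  have B_det : ∀ p, (B p).det = p.1 := by
    intro p
    conv_rhs => rw [← one_mul p.1, ← Real.cos_sq_add_sin_sq p.2]
    simp only [B, neg_mul, LinearMap.det_toContinuousLinearMap, LinearMap.det_toLin,
      Matrix.det_fin_two_of, sub_neg_eq_add]
    ring
  symm
  calc
    ∫⁻ p, f p = ∫⁻ p in polarCoord.source, f p := by
      rw [← setLIntegral_univ]
      exact setLIntegral_congr polarCoord_source_ae_eq_univ.symm
    _ = ∫⁻ p in polarCoord.symm '' polarCoord.target, f p := by
      rw [polarCoord.symm_image_target_eq_source]
    _ = ∫⁻ p in polarCoord.target, ENNReal.ofReal |(B p).det| * f (polarCoord.symm p) := by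
      exact lintegral_image_eq_lintegral_abs_det_fderiv_mul volume
        polarCoord.open_target.measurableSet A (polarCoord.symm.injOn) f
    _ = ∫⁻ p in polarCoord.target, ENNReal.ofReal p.1 * f (polarCoord.symm p) := by
      refine setLIntegral_congr_fun polarCoord.open_target.measurableSet
        (fun x hx => ?_)
      rw [B_det, abs_of_pos hx.1]

theorem my_Complex_lintegral (f : ℂ → ENNReal) :
    (∫⁻ p in polarCoord.target, ENNReal.ofReal p.1 * f (Complex.polarCoord.symm p)) = ∫⁻ z, f z := by
  rw [← (Complex.volume_preserving_equiv_real_prod.symm).lintegral_comp_emb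
    Complex.measurableEquivRealProd.symm.measurableEmbedding, ← my_lintegral_comp_polarCoord_symm]
  rfl

theorem exp_int_integral (m : ℤ) :
    (∫ θ in Ioo (-π) π, Complex.exp (m * θ * Complex.I)) =
      if m = 0 then (2 * π : ℂ) else 0 := by
  rw [← MeasureTheory.integral_Ioc_eq_integral_Ioo,
    ← intervalIntegral.integral_of_le (by linarith [Real.pi_pos] : -π ≤ π)]
  rcases eq_or_ne m 0 with hm | hm
  · simp [hm]
    norm_num
    ring
  · have hc : (m : ℂ) * Complex.I ≠ 0 := by
      simp [Complex.ext_iff, hm, Complex.I_ne_zero]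
    have : ∀ θ : ℝ, (m : ℂ) * θ * Complex.I = (m * Complex.I) * θ := by intro θ; ring
    simp_rw [this]
    rw [integral_exp_mul_complex hc, if_neg hm]
    have h1 : Complex.exp ((m * Complex.I) * π) = (-1 : ℂ) ^ m := by
      rw [show ((m : ℂ) * Complex.I) * π = m * (π * Complex.I) by push_cast; ring,
        Complex.exp_int_mul, Complex.exp_pi_mul_I]
    have h2 : Complex.exp ((m * Complex.I) * (-(π:ℂ))) = (-1 : ℂ) ^ m := by
      rw [show ((m : ℂ) * Complex.I) * (-(π:ℂ)) = ((-m : ℤ) : ℂ) * (π * Complex.I) by push_cast; ring,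
        Complex.exp_int_mul, Complex.exp_pi_mul_I, zpow_neg]
      exact inv_eq_of_mul_eq_one_right (by rw [← mul_zpow]; norm_num)
    push_cast
    rw [h1, h2, sub_self, zero_div]

theorem coeff_bound (g : ℂ → ℂ) (a : ℤ → ℂ)
    (hsum : ∀ z : ℂ, 0 < ‖z‖ → ‖z‖ < 1 →
      HasSum (fun j : ℤ => a j * z ^ j) (g z))
    (k : ℤ) {r : ℝ} (hr0 : 0 < r) (hr1 : r < 1) :
    2 * π * ‖a k‖ * r ^ k ≤
      ∫ θ in Ioo (-π) π, ‖g ((r : ℂ) * Complex.exp (θ * Complex.I))‖ := by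
  set z : ℝ → ℂ := fun θ => (r : ℂ) * Complex.exp (θ * Complex.I) with hz
  have habs : ∀ θ : ℝ, ‖z θ‖ = r := by
    intro θ
    simp [hz, Complex.norm_exp_ofReal_mul_I, abs_of_pos hr0]
  set F : ℤ → ℝ → ℂ := fun j θ => a j * (r : ℂ) ^ j *
    Complex.exp (((j : ℂ) - k) * θ * Complex.I) with hF
  have key : ∀ (j : ℤ) (θ : ℝ),
      a j * (z θ) ^ j * Complex.exp (-(k : ℂ) * θ * Complex.I) = F j θ := by
    intro j θ
    have h1 : ((r : ℂ) * Complex.exp (θ * Complex.I)) ^ j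
        = (r : ℂ) ^ j * Complex.exp ((j : ℂ) * (θ * Complex.I)) := by
      rw [mul_zpow, Complex.exp_int_mul]
    have h2 : Complex.exp ((j : ℂ) * (θ * Complex.I)) *
        Complex.exp (-(k : ℂ) * θ * Complex.I)
        = Complex.exp (((j : ℂ) - k) * θ * Complex.I) := by
      rw [← Complex.exp_add]; ring_nf
    simp only [hz, hF, h1]
    rw [mul_assoc (a j), mul_assoc, h2, ← mul_assoc]
  have hS : ∀ θ : ℝ, HasSum (fun j => F j θ)
      (g (z θ) * Complex.exp (-(k : ℂ) * θ * Complex.I)) := by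
    intro θ
    have := (hsum (z θ) (by rw [habs]; exact hr0) (by rw [habs]; exact hr1)).mul_right
      (Complex.exp (-(k : ℂ) * θ * Complex.I))
    simpa only [key] using this
  have hsummable : Summable (fun j : ℤ => ‖a j * (r : ℂ) ^ j‖) := by
    refine summable_norm_iff.mpr ?_
    have h := (hsum (r : ℂ) (by simpa [abs_of_pos hr0] using hr0)
      (by simpa [abs_of_pos hr0] using hr1)).summable
    exact h
  have hnorm : ∀ (j : ℤ) (θ : ℝ), ‖F j θ‖ = ‖a j * (r : ℂ) ^ j‖ := by
    intro j θ
    simp only [hF, norm_mul]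
    have : ‖Complex.exp (((j : ℂ) - k) * θ * Complex.I)‖ = 1 := by
      rw [Complex.norm_exp]
      simp [Complex.add_re, Complex.mul_re]
    rw [this, mul_one]
  have hmeas : ∀ j : ℤ, AEStronglyMeasurable (F j) (volume.restrict (Ioo (-π) π)) := by
    intro j
    refine Continuous.aestronglyMeasurable ?_
    simp only [hF]
    fun_prop
  have hlint : ∑' j : ℤ, ∫⁻ θ in Ioo (-π) π, ‖F j θ‖₊ ≠ ⊤ := by
    have hv : (volume (Ioo (-π) π)) ≠ ⊤ := by simp [Real.volume_Ioo]
    have : ∀ j : ℤ, ∫⁻ θ in Ioo (-π) π, (‖F j θ‖₊ : ENNReal)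
        = (‖a j * (r : ℂ) ^ j‖₊ : ENNReal) * volume (Ioo (-π) π) := by
      intro j
      have : ∀ θ : ℝ, (‖F j θ‖₊ : ENNReal) = (‖a j * (r : ℂ) ^ j‖₊ : ENNReal) := by
        intro θ
        congr 1
        ext
        exact hnorm j θ
      simp_rw [this]
      simp [lintegral_const]
    simp_rw [this]
    rw [ENNReal.tsum_mul_right]
    refine ENNReal.mul_ne_top ?_ hv
    rw [ENNReal.tsum_coe_ne_top_iff_summable]
    refine NNReal.summable_coe.mp ?_
    simpa [coe_nnnorm] using hsummable
  have hswap := integral_tsum hmeas hlint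
  have hval : ∀ j : ℤ, (∫ θ in Ioo (-π) π, F j θ)
      = if j = k then a k * (r : ℂ) ^ k * (2 * π) else 0 := by
    intro j
    simp only [hF]
    rw [MeasureTheory.integral_const_mul]
    have hcast : ∀ θ : ℝ, ((j : ℂ) - k) * θ * Complex.I
        = ((j - k : ℤ) : ℂ) * θ * Complex.I := by intro θ; push_cast; ring
    simp_rw [hcast]
    rw [exp_int_integral (j - k)]
    rcases eq_or_ne j k with h | h
    · subst h; simp [sub_self]
    · rw [if_neg (sub_ne_zero.mpr h), if_neg h, mul_zero]
  have hfinal : (∫ θ in Ioo (-π) π, g (z θ) * Complex.exp (-(k : ℂ) * θ * Complex.I))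
      = a k * (r : ℂ) ^ k * (2 * π) := by
    have h1 : (∫ θ in Ioo (-π) π, g (z θ) * Complex.exp (-(k : ℂ) * θ * Complex.I))
        = ∫ θ in Ioo (-π) π, ∑' j : ℤ, F j θ := by
      refine integral_congr_ae (Filter.Eventually.of_forall fun θ => ?_)
      exact ((hS θ).tsum_eq).symm
    rw [h1, hswap]
    simp_rw [hval]
    exact tsum_ite_eq k _
  have hnormle : ‖(a k * (r : ℂ) ^ k * (2 * π) : ℂ)‖
      ≤ ∫ θ in Ioo (-π) π, ‖g (z θ)‖ := by
    rw [← hfinal]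
    refine (norm_integral_le_integral_norm _).trans ?_
    refine le_of_eq (integral_congr_ae (Filter.Eventually.of_forall fun θ => ?_))
    simp only [norm_mul, Complex.norm_exp]
    simp [Complex.mul_re]
  have heq : ‖(a k * (r : ℂ) ^ k * (2 * π) : ℂ)‖ = 2 * π * ‖a k‖ * r ^ k := by
    rw [norm_mul, norm_mul, norm_zpow]
    have h2 : ‖(2 : ℂ) * π‖ = 2 * π := by
      rw [show ((2 : ℂ) * π) = ((2 * π : ℝ) : ℂ) by push_cast; ring, Complex.norm_of_nonneg (by positivity)]
    rw [Complex.norm_of_nonneg hr0.le, h2]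
    ring
  rw [← heq]
  exact hnormle

lemma my_ofReal_int_le_lint {μ : Measure ℝ} (f : ℝ → ℝ) (hnn : ∀ x, 0 ≤ f x) :
    ENNReal.ofReal (∫ x, f x ∂μ) ≤ ∫⁻ x, ENNReal.ofReal (f x) ∂μ := by
  calc ENNReal.ofReal (∫ x, f x ∂μ) = ‖∫ x, f x ∂μ‖ₑ :=
        (Real.enorm_eq_ofReal (integral_nonneg hnn)).symm
    _ ≤ ∫⁻ x, ‖f x‖ₑ ∂μ := enorm_integral_le_lintegral_enorm f
    _ = ∫⁻ x, ENNReal.ofReal (f x) ∂μ := by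
        refine lintegral_congr fun x => Real.enorm_eq_ofReal (hnn x)

lemma hD_open : IsOpen {z : ℂ | 0 < ‖z‖ ∧ ‖z‖ < 1} := by
  have : {z : ℂ | 0 < ‖z‖ ∧ ‖z‖ < 1}
      = (fun z : ℂ => ‖z‖) ⁻¹' (Ioi 0) ∩ (fun z : ℂ => ‖z‖) ⁻¹' (Iio 1) := by
    ext z; simp [mem_setOf_eq]
  rw [this]
  exact (isOpen_Ioi.preimage continuous_norm).inter
    (isOpen_Iio.preimage continuous_norm)

lemma hsymm_exp (p : ℝ × ℝ) :
    Complex.polarCoord.symm p = (p.1 : ℂ) * Complex.exp (p.2 * Complex.I) := by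
  rw [Complex.polarCoord_symm_apply, Complex.exp_mul_I]
  push_cast
  ring

theorem abs_coeff_le (g : ℂ → ℂ) (a : ℤ → ℂ)
    (hg : ContinuousOn g {z : ℂ | 0 < ‖z‖ ∧ ‖z‖ < 1})
    (hsum : ∀ z : ℂ, 0 < ‖z‖ → ‖z‖ < 1 →
      HasSum (fun j : ℤ => a j * z ^ j) (g z))
    (k : ℤ) (hk : k ≤ 1) :
    ENNReal.ofReal (‖a k‖) ≤
      ∫⁻ z in {z : ℂ | 0 < ‖z‖ ∧ ‖z‖ < 1},
        ENNReal.ofReal (‖g z‖ * ‖z‖ ^ 2) := by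
  set D : Set ℂ := {z : ℂ | 0 < ‖z‖ ∧ ‖z‖ < 1} with hDdef
  set f : ℂ → ENNReal := fun z => ENNReal.ofReal (‖g z‖ * ‖z‖ ^ 2) with hf
  set S : Set (ℝ × ℝ) := Ioo (0 : ℝ) 1 ×ˢ Ioo (-π) π with hSdef
  have hπ := Real.pi_pos
  -- rewrite J via polar coordinates
  have h1 : (∫⁻ z in D, f z) = ∫⁻ p in polarCoord.target,
      ENNReal.ofReal p.1 * (D.indicator f) (Complex.polarCoord.symm p) := by
    rw [← lintegral_indicator hD_open.measurableSet f, ← my_Complex_lintegral]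
  have hsub : S ⊆ polarCoord.target := by
    rintro ⟨r, θ⟩ ⟨hr, hθ⟩
    exact ⟨hr.1, hθ⟩
  have h2 : (∫⁻ p in S, ENNReal.ofReal p.1 * f (Complex.polarCoord.symm p))
      ≤ ∫⁻ p in polarCoord.target,
        ENNReal.ofReal p.1 * (D.indicator f) (Complex.polarCoord.symm p) := by
    refine le_trans (le_of_eq ?_) (lintegral_mono' (Measure.restrict_mono hsub le_rfl) le_rfl)
    refine setLIntegral_congr_fun (hSdef ▸ (measurableSet_Ioo.prod measurableSet_Ioo))
      ?_
    rintro ⟨r, θ⟩ ⟨hr, hθ⟩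
    have hmem : Complex.polarCoord.symm (r, θ) ∈ D := by
      constructor <;> rw [Complex.norm_polarCoord_symm] <;>
        simp [abs_of_pos hr.1, hr.1, hr.2]
    dsimp only
    rw [indicator_of_mem hmem]
  -- explicit form of the integrand on S
  have h3 : (∫⁻ p in S, ENNReal.ofReal p.1 * f (Complex.polarCoord.symm p))
      = ∫⁻ p in S, ENNReal.ofReal
          (p.1 ^ 3 * ‖g ((p.1 : ℂ) * Complex.exp (p.2 * Complex.I))‖) := by
    refine setLIntegral_congr_fun (measurableSet_Ioo.prod measurableSet_Ioo)
      ?_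
    rintro ⟨r, θ⟩ ⟨hr, hθ⟩
    simp only [hf, hsymm_exp]
    have habs : ‖(r : ℂ) * Complex.exp (θ * Complex.I)‖ = r := by
      simp [Complex.norm_exp_ofReal_mul_I, abs_of_pos hr.1]
    rw [habs, ← ENNReal.ofReal_mul (le_of_lt hr.1)]
    congr 1
    ring
  set φ : ℝ × ℝ → ℂ := fun p => (p.1 : ℂ) * Complex.exp (p.2 * Complex.I) with hφ
  have hφc : Continuous φ := by fun_prop
  have hU : IsOpen (φ ⁻¹' D) := hD_open.preimage hφc
  have hSU : S ⊆ φ ⁻¹' D := by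
    rintro ⟨r, θ⟩ ⟨hr, hθ⟩
    have habs : ‖φ (r, θ)‖ = r := by
      simp [hφ, Complex.norm_exp_ofReal_mul_I, abs_of_pos hr.1]
    show 0 < ‖φ (r, θ)‖ ∧ ‖φ (r, θ)‖ < 1
    rw [habs]
    exact ⟨hr.1, hr.2⟩
  have hmeasF : AEMeasurable (fun p : ℝ × ℝ => ENNReal.ofReal (p.1 ^ 3 * ‖g (φ p)‖))
      (volume.restrict S) := by
    have hco : ContinuousOn (fun p : ℝ × ℝ => ENNReal.ofReal (p.1 ^ 3 * ‖g (φ p)‖))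
        (φ ⁻¹' D) := by
      apply ENNReal.continuous_ofReal.comp_continuousOn
      apply ContinuousOn.mul
      · exact (continuous_fst.pow 3).continuousOn
      · exact continuous_norm.comp_continuousOn
          (hg.comp hφc.continuousOn fun p hp => hp)
    exact (hco.aemeasurable hU.measurableSet).mono_measure (Measure.restrict_mono hSU le_rfl)
  have hprodeq : (volume.restrict (Ioo (0:ℝ) 1)).prod (volume.restrict (Ioo (-π) π))
      = volume.restrict S := by
    rw [Measure.prod_restrict, hSdef, ← Measure.volume_eq_prod]
  have h4 : (∫⁻ p in S, ENNReal.ofReal (p.1 ^ 3 * ‖g (φ p)‖))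
      = ∫⁻ r in Ioo (0:ℝ) 1, ∫⁻ θ in Ioo (-π) π,
          ENNReal.ofReal (r ^ 3 * ‖g (φ (r, θ))‖) := by
    rw [← hprodeq] at hmeasF ⊢
    exact lintegral_prod _ hmeasF
  have hak : (0:ℝ) ≤ ‖a k‖ := norm_nonneg _
  have hc2 : (0:ℝ) ≤ 2 * π * ‖a k‖ := by positivity
  have inner : ∀ r ∈ Ioo (0:ℝ) 1,
      ENNReal.ofReal (2 * π * ‖a k‖ * r ^ 4) ≤
        ∫⁻ θ in Ioo (-π) π, ENNReal.ofReal (r ^ 3 * ‖g (φ (r, θ))‖) := by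
    intro r hr
    have hr0 : (0:ℝ) < r := hr.1
    have hb := coeff_bound g a hsum k hr.1 hr.2
    have hrk : r ≤ r ^ k := by
      have h1 : (1:ℝ) ≤ r⁻¹ := (one_le_inv₀ hr0).mpr hr.2.le
      calc r = (r⁻¹) ^ (-1 : ℤ) := by
            rw [zpow_neg, zpow_one, inv_inv]
        _ ≤ (r⁻¹) ^ (-k) := zpow_le_zpow_right₀ h1 (by omega)
        _ = r ^ k := by rw [inv_zpow, ← zpow_neg, neg_neg]
    have step1 : 2 * π * ‖a k‖ * r ^ 4 ≤ r ^ 3 * (2 * π * ‖a k‖ * r ^ k) := by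
      have key : r ^ 3 * r ≤ r ^ 3 * r ^ k :=
        mul_le_mul_of_nonneg_left hrk (by positivity)
      nlinarith [mul_le_mul_of_nonneg_left key hc2]
    calc ENNReal.ofReal (2 * π * ‖a k‖ * r ^ 4)
        ≤ ENNReal.ofReal (r ^ 3 * (2 * π * ‖a k‖ * r ^ k)) :=
          ENNReal.ofReal_le_ofReal step1
      _ = ENNReal.ofReal (r ^ 3) * ENNReal.ofReal (2 * π * ‖a k‖ * r ^ k) :=
          ENNReal.ofReal_mul (by positivity)
      _ ≤ ENNReal.ofReal (r ^ 3) * ENNReal.ofReal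
            (∫ θ in Ioo (-π) π, ‖g ((r : ℂ) * Complex.exp (θ * Complex.I))‖) :=
          mul_le_mul_right (ENNReal.ofReal_le_ofReal hb) _
      _ ≤ ENNReal.ofReal (r ^ 3) * ∫⁻ θ in Ioo (-π) π,
            ENNReal.ofReal (‖g ((r : ℂ) * Complex.exp (θ * Complex.I))‖) :=
          mul_le_mul_right (my_ofReal_int_le_lint _ (fun θ => norm_nonneg _)) _
      _ = ∫⁻ θ in Ioo (-π) π, ENNReal.ofReal (r ^ 3) *
            ENNReal.ofReal (‖g ((r : ℂ) * Complex.exp (θ * Complex.I))‖) :=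
          (lintegral_const_mul' _ _ ENNReal.ofReal_ne_top).symm
      _ = ∫⁻ θ in Ioo (-π) π, ENNReal.ofReal (r ^ 3 * ‖g (φ (r, θ))‖) := by
          refine lintegral_congr fun θ => ?_
          rw [← ENNReal.ofReal_mul (by positivity)]
  have hr4 : (∫⁻ r in Ioo (0:ℝ) 1, ENNReal.ofReal (r ^ 4)) = ENNReal.ofReal (1/5 : ℝ) := by
    have hint : IntegrableOn (fun r : ℝ => r ^ 4) (Ioo (0:ℝ) 1) :=
      (((continuous_pow 4).intervalIntegrable 0 1).1).mono_set Ioo_subset_Ioc_self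
    rw [← ofReal_integral_eq_lintegral_ofReal hint
      (Filter.Eventually.of_forall fun r => by positivity)]
    congr 1
    rw [← MeasureTheory.integral_Ioc_eq_integral_Ioo,
      ← intervalIntegral.integral_of_le zero_le_one, integral_pow]
    norm_num
  have outer : ENNReal.ofReal (2 * π * ‖a k‖) * ENNReal.ofReal (1/5 : ℝ)
      ≤ ∫⁻ r in Ioo (0:ℝ) 1, ∫⁻ θ in Ioo (-π) π,
          ENNReal.ofReal (r ^ 3 * ‖g (φ (r, θ))‖) := by
    calc ENNReal.ofReal (2 * π * ‖a k‖) * ENNReal.ofReal (1/5 : ℝ)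
        = ∫⁻ r in Ioo (0:ℝ) 1, ENNReal.ofReal (2 * π * ‖a k‖ * r ^ 4) := by
          simp_rw [ENNReal.ofReal_mul hc2]
          rw [lintegral_const_mul' _ _ ENNReal.ofReal_ne_top, hr4]
      _ ≤ _ := lintegral_mono_ae
          ((ae_restrict_iff' measurableSet_Ioo).mpr (Filter.Eventually.of_forall inner))
  calc ENNReal.ofReal (‖a k‖)
      ≤ ENNReal.ofReal (2 * π * ‖a k‖) * ENNReal.ofReal (1/5 : ℝ) := by
        rw [← ENNReal.ofReal_mul hc2]
        apply ENNReal.ofReal_le_ofReal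
        nlinarith [Real.pi_gt_three]
    _ ≤ ∫⁻ r in Ioo (0:ℝ) 1, ∫⁻ θ in Ioo (-π) π,
          ENNReal.ofReal (r ^ 3 * ‖g (φ (r, θ))‖) := outer
    _ = ∫⁻ p in S, ENNReal.ofReal (p.1 ^ 3 * ‖g (φ p)‖) := h4.symm
    _ = ∫⁻ p in S, ENNReal.ofReal p.1 * f (Complex.polarCoord.symm p) := h3.symm
    _ ≤ ∫⁻ p in polarCoord.target,
          ENNReal.ofReal p.1 * (D.indicator f) (Complex.polarCoord.symm p) := h2
    _ = ∫⁻ z in D, f z := h1.symm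

theorem E_eq (q : ℝ) (hq : -2 < q) (hq0 : q ≤ 0) :
    (∫⁻ z in {z : ℂ | 0 < ‖z‖ ∧ ‖z‖ < 1},
      ENNReal.ofReal (‖z‖ ^ q)) = ENNReal.ofReal (2 * π / (q + 2)) := by
  set D : Set ℂ := {z : ℂ | 0 < ‖z‖ ∧ ‖z‖ < 1} with hDdef
  set f : ℂ → ENNReal := fun z => ENNReal.ofReal (‖z‖ ^ q) with hf
  set S : Set (ℝ × ℝ) := Ioo (0 : ℝ) 1 ×ˢ Ioo (-π) π with hSdef
  have hπ := Real.pi_pos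
  have hSmeas : MeasurableSet S := measurableSet_Ioo.prod measurableSet_Ioo
  have h1 : (∫⁻ z in D, f z) = ∫⁻ p in polarCoord.target,
      ENNReal.ofReal p.1 * (D.indicator f) (Complex.polarCoord.symm p) := by
    rw [← lintegral_indicator hD_open.measurableSet f, ← my_Complex_lintegral]
  have h2 : (∫⁻ p in polarCoord.target,
      ENNReal.ofReal p.1 * (D.indicator f) (Complex.polarCoord.symm p))
      = ∫⁻ p in polarCoord.target,
        S.indicator (fun p : ℝ × ℝ => ENNReal.ofReal (p.1 ^ (q + 1))) p := by
    refine setLIntegral_congr_fun polarCoord.open_target.measurableSet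
      ?_
    rintro ⟨r, θ⟩ ⟨hr, hθ⟩
    simp only [Complex.polarCoord_target] at hθ
    have hr' : (0:ℝ) < r := hr
    have habs : ‖Complex.polarCoord.symm (r, θ)‖ = r := by
      rw [Complex.norm_polarCoord_symm, abs_of_pos hr']
    by_cases hr1 : r < 1
    · have hmem : Complex.polarCoord.symm (r, θ) ∈ D := by
        constructor <;> rw [habs] <;> assumption
      have hmemS : ((r, θ) : ℝ × ℝ) ∈ S := ⟨⟨hr', hr1⟩, hθ⟩
      dsimp only
      rw [indicator_of_mem hmem, indicator_of_mem hmemS, hf]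
      simp only
      rw [habs, ← ENNReal.ofReal_mul hr'.le]
      congr 1
      rw [Real.rpow_add hr', Real.rpow_one]
      ring
    · have hmem : Complex.polarCoord.symm (r, θ) ∉ D := by
        rw [hDdef, mem_setOf_eq, habs]
        push_neg
        intro
        linarith
      have hmemS : ((r, θ) : ℝ × ℝ) ∉ S := by
        rw [hSdef]
        intro hc
        exact hr1 hc.1.2
      dsimp only
      rw [indicator_of_notMem hmem, indicator_of_notMem hmemS, mul_zero]
  have hSsub : S ⊆ polarCoord.target := by
    rintro ⟨r, θ⟩ ⟨hr, hθ⟩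
    exact ⟨hr.1, hθ⟩
  have h3 : (∫⁻ p in polarCoord.target,
      S.indicator (fun p : ℝ × ℝ => ENNReal.ofReal (p.1 ^ (q + 1))) p)
      = ∫⁻ p in S, ENNReal.ofReal (p.1 ^ (q + 1)) := by
    rw [lintegral_indicator hSmeas, Measure.restrict_restrict hSmeas,
      inter_eq_self_of_subset_left hSsub]
  have hmeasF : AEMeasurable (fun p : ℝ × ℝ => ENNReal.ofReal (p.1 ^ (q + 1)))
      (volume.restrict S) := by
    have hUopen : IsOpen ((Ioi (0:ℝ)) ×ˢ (univ : Set ℝ)) := isOpen_Ioi.prod isOpen_univ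
    have hco : ContinuousOn (fun p : ℝ × ℝ => ENNReal.ofReal (p.1 ^ (q + 1)))
        ((Ioi (0:ℝ)) ×ˢ (univ : Set ℝ)) := by
      refine ENNReal.continuous_ofReal.comp_continuousOn ?_
      intro p hp
      have : ContinuousAt (fun p : ℝ × ℝ => p.1 ^ (q + 1)) p :=
        (Real.continuousAt_rpow_const p.1 (q + 1) (Or.inl (ne_of_gt hp.1))).comp
          continuousAt_fst
      exact this.continuousWithinAt
    refine (hco.aemeasurable hUopen.measurableSet).mono_measure
      (Measure.restrict_mono ?_ le_rfl)
    rintro ⟨r, θ⟩ ⟨hr, hθ⟩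
    exact ⟨hr.1, mem_univ _⟩
  have hprodeq : (volume.restrict (Ioo (0:ℝ) 1)).prod (volume.restrict (Ioo (-π) π))
      = volume.restrict S := by
    rw [Measure.prod_restrict, hSdef, ← Measure.volume_eq_prod]
  have h4 : (∫⁻ p in S, ENNReal.ofReal (p.1 ^ (q + 1)))
      = ∫⁻ r in Ioo (0:ℝ) 1, ∫⁻ θ in Ioo (-π) π, ENNReal.ofReal (r ^ (q + 1)) := by
    rw [← hprodeq] at hmeasF ⊢
    exact lintegral_prod _ hmeasF
  have h5 : (∫⁻ r in Ioo (0:ℝ) 1, ∫⁻ θ in Ioo (-π) π, ENNReal.ofReal (r ^ (q + 1)))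
      = ∫⁻ r in Ioo (0:ℝ) 1, ENNReal.ofReal (r ^ (q + 1)) * ENNReal.ofReal (2 * π) := by
    refine lintegral_congr fun r => ?_
    rw [setLIntegral_const, Real.volume_Ioo]
    congr 1
    ring
  have h6 : (∫⁻ r in Ioo (0:ℝ) 1, ENNReal.ofReal (r ^ (q + 1))) = ENNReal.ofReal (1 / (q + 2)) := by
    have hq1 : (-1:ℝ) < q + 1 := by linarith
    have hint : IntegrableOn (fun r : ℝ => r ^ (q + 1)) (Ioo (0:ℝ) 1) :=
      ((intervalIntegral.intervalIntegrable_rpow' hq1 (a := 0) (b := 1)).1).mono_set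
        Ioo_subset_Ioc_self
    rw [← ofReal_integral_eq_lintegral_ofReal hint ?_]
    · congr 1
      rw [← MeasureTheory.integral_Ioc_eq_integral_Ioo,
        ← intervalIntegral.integral_of_le zero_le_one,
        integral_rpow (Or.inl hq1)]
      rw [Real.one_rpow, Real.zero_rpow (by linarith : q + 1 + 1 ≠ 0)]
      ring_nf
    · refine (ae_restrict_iff' measurableSet_Ioo).mpr (Filter.Eventually.of_forall ?_)
      intro r hr
      exact Real.rpow_nonneg hr.1.le _
  rw [h1, h2, h3, h4, h5, lintegral_mul_const' _ _ ENNReal.ofReal_ne_top, h6,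
    ← ENNReal.ofReal_mul (div_nonneg zero_le_one (by linarith))]
  congr 1
  field_simp

/-- `L¹ → L^p` bound for the Friedrichs operator on `A²(𝔻*, |z|²)`:
for each `p ∈ [2,4)` there is `C_p > 0` such that for every `g ∈ A²(𝔻*, |z|²)`
with Laurent coefficients `a_k` (`k ≥ -1`), the function
`F(g)(z) = (conj a₁/2) z⁻¹ + conj a₀ + (3 conj a₋₁/2) z` satisfies
`‖F(g)‖_{L^p(𝔻*, |z|² dA)} ≤ C_p ∫_{𝔻*} |g| |z|² dA`. -/
theorem stmt_15 (D : Set ℂ) (hD : D = {z : ℂ | 0 < ‖z‖ ∧ ‖z‖ < 1})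
    (p : ℝ) (hp2 : 2 ≤ p) (hp4 : p < 4) :
    ∃ C : ℝ, 0 < C ∧
      ∀ (g : ℂ → ℂ) (a : ℤ → ℂ),
        DifferentiableOn ℂ g D →
        Integrable (fun z => ‖g z‖ ^ 2 * ‖z‖ ^ 2) (volume.restrict D) →
        (∀ k : ℤ, k < -1 → a k = 0) →
        (∀ z ∈ D, HasSum (fun k : ℤ => a k * z ^ k) (g z)) →
        (∫⁻ z in D, ENNReal.ofReal
            (‖(starRingEnd ℂ) (a 1) / 2 * z⁻¹ + (starRingEnd ℂ) (a 0) +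
              3 * (starRingEnd ℂ) (a (-1)) / 2 * z‖ ^ p * ‖z‖ ^ 2)) ^ (1 / p) ≤
          ENNReal.ofReal (C * ∫ z in D, ‖g z‖ * ‖z‖ ^ 2) := by
  subst hD
  have hπ := Real.pi_pos
  have hp0 : (0:ℝ) < p := by linarith
  have hpne : p ≠ 0 := ne_of_gt hp0
  have h4p : (0:ℝ) < 4 - p := by linarith
  set K : ℝ := (2 * π / (4 - p)) ^ (1 / p) with hK
  have hKpos : 0 < K := Real.rpow_pos_of_pos (by positivity) _
  refine ⟨3 * K, by positivity, ?_⟩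
  intro g a hdiff hint2 _hvanish hsum
  set D : Set ℂ := {z : ℂ | 0 < ‖z‖ ∧ ‖z‖ < 1} with hDdef
  have hDmeas : MeasurableSet D := hD_open.measurableSet
  have hgc : ContinuousOn g D := hdiff.continuousOn
  have hsum' : ∀ z : ℂ, 0 < ‖z‖ → ‖z‖ < 1 →
      HasSum (fun j : ℤ => a j * z ^ j) (g z) := fun z h1 h2 => hsum z ⟨h1, h2⟩
  set I : ℝ := ∫ z in D, ‖g z‖ * ‖z‖ ^ 2 with hI
  have hI0 : 0 ≤ I := integral_nonneg fun z => by positivity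
  have hDfin : volume D < ⊤ := by
    refine lt_of_le_of_lt (measure_mono fun z hz => ?_) (measure_ball_lt_top (x := (0:ℂ)) (r := 1))
    rw [mem_ball_zero_iff]
    exact hz.2
  have hmeasI : AEStronglyMeasurable (fun z => ‖g z‖ * ‖z‖ ^ 2)
      (volume.restrict D) :=
    ((continuous_norm.comp_continuousOn hgc).mul
      ((continuous_norm.pow 2).continuousOn)).aestronglyMeasurable hDmeas
  have hint1 : Integrable (fun z => ‖g z‖ * ‖z‖ ^ 2)
      (volume.restrict D) := by
    have hdom : Integrable (fun z : ℂ => 1 + ‖g z‖ ^ 2 * ‖z‖ ^ 2)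
        (volume.restrict D) := (integrableOn_const hDfin.ne).add hint2
    refine hdom.mono' hmeasI ?_
    refine (ae_restrict_iff' hDmeas).mpr (Filter.Eventually.of_forall fun z hz => ?_)
    have h1 : ‖z‖ ≤ 1 := hz.2.le
    have h2 : 0 ≤ ‖g z‖ := norm_nonneg _
    have h3 : 0 ≤ ‖z‖ := norm_nonneg _
    rw [norm_of_nonneg (by positivity)]
    nlinarith [sq_nonneg (‖g z‖ - 1), sq_nonneg (‖z‖),
      sq_nonneg (‖g z‖ * ‖z‖)]
  have hJ : (∫⁻ z in D, ENNReal.ofReal (‖g z‖ * ‖z‖ ^ 2))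
      = ENNReal.ofReal I :=
    (ofReal_integral_eq_lintegral_ofReal hint1
      ((ae_restrict_iff' hDmeas).mpr (Filter.Eventually.of_forall fun z _ => by positivity))).symm
  have hcoeff : ∀ k : ℤ, k ≤ 1 → ‖a k‖ ≤ I := by
    intro k hk
    have h := abs_coeff_le g a hgc hsum' k hk
    rw [hJ] at h
    exact (ENNReal.ofReal_le_ofReal_iff hI0).mp h
  have h3I : (0:ℝ) ≤ 3 * I := by linarith
  have hpoint : ∀ z ∈ D,
      ‖(starRingEnd ℂ) (a 1) / 2 * z⁻¹ + (starRingEnd ℂ) (a 0) +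
          3 * (starRingEnd ℂ) (a (-1)) / 2 * z‖ ^ p * ‖z‖ ^ 2
        ≤ (3 * I) ^ p * ‖z‖ ^ (2 - p) := by
    intro z hz
    have ht0 : 0 < ‖z‖ := hz.1
    have ht1 : ‖z‖ < 1 := hz.2
    have htinv : 1 ≤ (‖z‖)⁻¹ := (one_le_inv₀ ht0).mpr ht1.le
    have httinv : ‖z‖ ≤ (‖z‖)⁻¹ := le_trans ht1.le htinv
    have habsF : ‖(starRingEnd ℂ) (a 1) / 2 * z⁻¹ + (starRingEnd ℂ) (a 0) +
        3 * (starRingEnd ℂ) (a (-1)) / 2 * z‖ ≤ 3 * I * (‖z‖)⁻¹ := by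
      have htri : ‖(starRingEnd ℂ) (a 1) / 2 * z⁻¹ + (starRingEnd ℂ) (a 0) +
          3 * (starRingEnd ℂ) (a (-1)) / 2 * z‖
          ≤ ‖(starRingEnd ℂ) (a 1) / 2 * z⁻¹‖ + ‖(starRingEnd ℂ) (a 0)‖
            + ‖3 * (starRingEnd ℂ) (a (-1)) / 2 * z‖ :=
        le_trans (norm_add_le _ _)
          (add_le_add_left (norm_add_le _ _) _)
    
      have hA : ‖(starRingEnd ℂ) (a 1) / 2 * z⁻¹‖
          = ‖a 1‖ / 2 * (‖z‖)⁻¹ := by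
        rw [norm_mul, norm_div, Complex.norm_conj, norm_inv, Complex.norm_two]
      have hB : ‖(starRingEnd ℂ) (a 0)‖ = ‖a 0‖ := Complex.norm_conj _
      have hC : ‖3 * (starRingEnd ℂ) (a (-1)) / 2 * z‖
          = 3 * ‖a (-1)‖ / 2 * ‖z‖ := by
        rw [norm_mul, norm_div, norm_mul, Complex.norm_conj, Complex.norm_two]
        norm_num
      have k1 : ‖a 1‖ ≤ I := hcoeff 1 le_rfl
      have k0 : ‖a 0‖ ≤ I := hcoeff 0 (by norm_num)
      have km : ‖a (-1)‖ ≤ I := hcoeff (-1) (by norm_num)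
      have hm0 : 0 ≤ ‖a (-1)‖ := norm_nonneg _
      have h10 : 0 ≤ ‖a 1‖ := norm_nonneg _
      rw [hA, hB, hC] at htri
      nlinarith [mul_le_mul_of_nonneg_right k1 (by positivity : (0:ℝ) ≤ (‖z‖)⁻¹),
        mul_le_mul_of_nonneg_right km ht0.le,
        mul_le_mul_of_nonneg_left httinv (by linarith : (0:ℝ) ≤ 3 * ‖a (-1)‖ / 2),
        mul_le_mul_of_nonneg_left httinv (by linarith : (0:ℝ) ≤ 3 * I / 2)]
    calc ‖(starRingEnd ℂ) (a 1) / 2 * z⁻¹ + (starRingEnd ℂ) (a 0) +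
          3 * (starRingEnd ℂ) (a (-1)) / 2 * z‖ ^ p * ‖z‖ ^ 2
        ≤ (3 * I * (‖z‖)⁻¹) ^ p * ‖z‖ ^ 2 :=
          mul_le_mul_of_nonneg_right
            (Real.rpow_le_rpow (norm_nonneg _) habsF hp0.le) (by positivity)
      _ = (3 * I) ^ p * (((‖z‖)⁻¹) ^ p * ‖z‖ ^ 2) := by
          rw [Real.mul_rpow h3I (by positivity)]
          ring
      _ = (3 * I) ^ p * ‖z‖ ^ (2 - p) := by
          congr 1
          rw [Real.inv_rpow ht0.le, ← Real.rpow_neg ht0.le,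
            ← Real.rpow_natCast (‖z‖) 2, ← Real.rpow_add ht0]
          congr 1
          push_cast
          ring
  have hE : (∫⁻ z in D, ENNReal.ofReal (‖z‖ ^ (2 - p)))
      = ENNReal.ofReal (2 * π / (4 - p)) := by
    have h := E_eq (2 - p) (by linarith) (by linarith)
    rw [show (2:ℝ) - p + 2 = 4 - p by ring] at h
    exact h
  calc (∫⁻ z in D, ENNReal.ofReal
          (‖(starRingEnd ℂ) (a 1) / 2 * z⁻¹ + (starRingEnd ℂ) (a 0) +
            3 * (starRingEnd ℂ) (a (-1)) / 2 * z‖ ^ p * ‖z‖ ^ 2)) ^ (1 / p)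
      ≤ (∫⁻ z in D, ENNReal.ofReal ((3 * I) ^ p * ‖z‖ ^ (2 - p))) ^ (1 / p) :=
        ENNReal.rpow_le_rpow (lintegral_mono_ae ((ae_restrict_iff' hDmeas).mpr
          (Filter.Eventually.of_forall fun z hz =>
            ENNReal.ofReal_le_ofReal (hpoint z hz)))) (by positivity)
    _ = (ENNReal.ofReal ((3 * I) ^ p) * ENNReal.ofReal (2 * π / (4 - p))) ^ (1 / p) := by
        simp_rw [ENNReal.ofReal_mul (Real.rpow_nonneg h3I p)]
        rw [lintegral_const_mul' _ _ ENNReal.ofReal_ne_top, hE]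
    _ = ENNReal.ofReal (3 * I * K) := by
        rw [← ENNReal.ofReal_mul (Real.rpow_nonneg h3I p),
          ENNReal.ofReal_rpow_of_nonneg (by positivity) (by positivity)]
        congr 1
        rw [Real.mul_rpow (Real.rpow_nonneg h3I p) (by positivity),
          ← Real.rpow_mul h3I, mul_one_div_cancel hpne, Real.rpow_one, hK]
    _ ≤ ENNReal.ofReal (3 * K * I) := by
        apply ENNReal.ofReal_le_ofReal
        nlinarith
end

section
/- With F the Friedrichs operator on A²(𝔻*, |z|²), the square F² = F ∘ F satisfies F²(g)(z) = a₀ + (3/4) a₁ z for every g(z) = Σ_{n≥0} a_n z^n in A⁴(𝔻*, |z|²) (note no z^{-1} term occurs since 1/z ∉ L⁴(𝔻*, |z|² dA)), and consequently for every p ∈ [4, ∞] there is C_p with ‖F²(g)‖_{L^p(𝔻*,|z|²dA)} ≤ C_p ∫_{𝔻*} |g| |z|² dA. -/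
open MeasureTheory Complex Real
open Metric
open scoped ENNReal NNReal

private lemma key_coeff (g : ℂ → ℂ) (a : ℕ → ℂ)
    (hsum : ∀ z ∈ {z : ℂ | 0 < ‖z‖ ∧ ‖z‖ < 1},
      HasSum (fun n : ℕ => a n * z ^ n) (g z))
    (n : ℕ) (R : ℝ) (hR0 : 0 < R) (hR1 : R < 1) :
    ‖a n‖ ≤ ((2 * π)⁻¹ * ∫ θ in (0:ℝ)..2*π, ‖g (circleMap 0 R θ)‖) * R⁻¹ ^ n := by
  set P : FormalMultilinearSeries ℂ ℂ ℂ := FormalMultilinearSeries.ofScalars ℂ a with hP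
  set r : ℝ := (R + 1) / 2 with hr
  have hRr : R < r := by rw [hr]; linarith
  have hr0 : 0 < r := by rw [hr]; linarith
  have hr1 : r < 1 := by rw [hr]; linarith
  -- summability at r
  have hzr : (r : ℂ) ∈ {z : ℂ | 0 < ‖z‖ ∧ ‖z‖ < 1} := by
    simp [Complex.norm_real, Real.norm_eq_abs, abs_of_pos hr0, hr0, hr1, hr0.ne']
  have hs : Summable fun n => a n * (r : ℂ) ^ n := (hsum _ hzr).summable
  have hsn : Summable fun n => ‖P n‖ * r ^ n := by
    refine (summable_norm_iff.mpr hs).congr fun k => ?_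
    rw [hP, FormalMultilinearSeries.ofScalars_norm, norm_mul, norm_pow, Complex.norm_real,
      Real.norm_of_nonneg hr0.le]
  have hrad : ((r.toNNReal : ℝ≥0) : ℝ≥0∞) ≤ P.radius := by
    apply P.le_radius_of_summable
    simpa [Real.coe_toNNReal r hr0.le] using hsn
  have hradpos : 0 < P.radius := lt_of_lt_of_le (by
    simp [ENNReal.coe_pos, Real.toNNReal_pos, hr0]) hrad
  have hsub : Metric.closedBall (0 : ℂ) R ⊆ Metric.eball (0 : ℂ) P.radius := by
    intro x hx
    rw [Metric.mem_eball, edist_dist]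
    calc ENNReal.ofReal (dist x 0) ≤ ENNReal.ofReal R :=
          ENNReal.ofReal_le_ofReal (Metric.mem_closedBall.mp hx)
      _ < ENNReal.ofReal r := by
          exact (ENNReal.ofReal_lt_ofReal_iff hr0).mpr hRr
      _ ≤ P.radius := by rwa [ENNReal.ofReal]
  have hG : HasFPowerSeriesOnBall P.sum P 0 P.radius :=
    P.hasFPowerSeriesOnBall hradpos
  have hdiff : DifferentiableOn ℂ P.sum (Metric.closedBall (0 : ℂ) (R.toNNReal : ℝ)) := by
    refine (hG.differentiableOn).mono ?_
    simpa [Real.coe_toNNReal R hR0.le, zero_add] using hsub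
  have hc : HasFPowerSeriesOnBall P.sum (cauchyPowerSeries P.sum 0 R.toNNReal) 0 R.toNNReal :=
    hdiff.hasFPowerSeriesOnBall (by simpa using hR0)
  have heq : P = cauchyPowerSeries P.sum 0 R.toNNReal :=
    hG.hasFPowerSeriesAt.eq_formalMultilinearSeries hc.hasFPowerSeriesAt
  -- P.sum = g on the circle
  have hPg : ∀ θ : ℝ, P.sum (circleMap 0 R θ) = g (circleMap 0 R θ) := by
    intro θ
    have hmem : circleMap 0 R θ ∈ {z : ℂ | 0 < ‖z‖ ∧ ‖z‖ < 1} := by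
      simp [norm_circleMap_zero, abs_of_pos hR0, hR0, hR1, hR0.ne']
    have hball : circleMap 0 R θ ∈ Metric.eball (0 : ℂ) P.radius := by
      apply hsub
      simp [Metric.mem_closedBall, Complex.dist_eq, norm_circleMap_zero, abs_of_pos hR0]
    have h1 : HasSum (fun k : ℕ => P k fun _ => circleMap 0 R θ) (P.sum (circleMap 0 R θ)) :=
      P.hasSum hball
    have h2 : HasSum (fun k : ℕ => a k * circleMap 0 R θ ^ k) (g (circleMap 0 R θ)) :=
      hsum _ hmem
    have h1' : HasSum (fun k : ℕ => a k * circleMap 0 R θ ^ k) (P.sum (circleMap 0 R θ)) := by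
      refine h1.congr_fun fun k => ?_
      rw [hP, FormalMultilinearSeries.ofScalars_apply_eq, smul_eq_mul]
    exact h1'.unique h2
  have hnorm : ‖a n‖ = ‖P n‖ := (FormalMultilinearSeries.ofScalars_norm ℂ a n).symm
  calc ‖a n‖ = ‖cauchyPowerSeries P.sum 0 R.toNNReal n‖ := by rw [hnorm, congrFun heq n]
    _ ≤ ((2 * π)⁻¹ * ∫ θ in (0:ℝ)..2*π, ‖P.sum (circleMap 0 (R.toNNReal : ℝ) θ)‖) *
        |(R.toNNReal : ℝ)|⁻¹ ^ n := norm_cauchyPowerSeries_le _ _ _ _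
    _ = ((2 * π)⁻¹ * ∫ θ in (0:ℝ)..2*π, ‖g (circleMap 0 R θ)‖) * R⁻¹ ^ n := by
        rw [Real.coe_toNNReal R hR0.le, abs_of_pos hR0]
        congr 2
        exact intervalIntegral.integral_congr fun θ _ => by rw [hPg θ]

private lemma symm_eq_circleMap (p : ℝ × ℝ) :
    Complex.polarCoord.symm p = circleMap 0 p.1 p.2 := by
  rw [Complex.polarCoord_symm_apply, circleMap_zero, Complex.exp_mul_I]
  simp [Complex.ofReal_cos, Complex.ofReal_sin]

private lemma coeff_le (g : ℂ → ℂ) (a : ℕ → ℂ)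
    (hg : DifferentiableOn ℂ g {z : ℂ | 0 < ‖z‖ ∧ ‖z‖ < 1})
    (hsum : ∀ z ∈ {z : ℂ | 0 < ‖z‖ ∧ ‖z‖ < 1},
      HasSum (fun n : ℕ => a n * z ^ n) (g z))
    {n : ℕ} (hn : n ≤ 1) :
    ‖a n‖ ≤ 3 * ∫ z in {z : ℂ | 1/2 < ‖z‖ ∧ ‖z‖ < 3/4},
      ‖g z‖ := by
  set A : Set ℂ := {z : ℂ | 1/2 < ‖z‖ ∧ ‖z‖ < 3/4} with hA
  have hAopen : IsOpen A := by
    rw [hA, Set.setOf_and]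
    exact (isOpen_lt continuous_const continuous_norm).inter
      (isOpen_lt continuous_norm continuous_const)
  set S : Set (ℝ × ℝ) := Set.Ioo (1/2 : ℝ) (3/4) ×ˢ Set.Ioo (-π) π with hS
  set F : ℝ × ℝ → ℝ := fun p => p.1 * ‖g (circleMap 0 p.1 p.2)‖ with hF
  set K : Set (ℝ × ℝ) := Set.Icc (1/2 : ℝ) (3/4) ×ˢ Set.Icc (-π) π with hK
  have hKc : IsCompact K := isCompact_Icc.prod isCompact_Icc
  have hgc : ContinuousOn g {z : ℂ | 0 < ‖z‖ ∧ ‖z‖ < 1} := hg.continuousOn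
  have hFc : ContinuousOn F K := by
    apply (continuous_fst.continuousOn).mul
    apply continuous_norm.comp_continuousOn
    have hcm : Continuous fun p : ℝ × ℝ => circleMap 0 p.1 p.2 := by
      simp only [circleMap_zero]
      fun_prop
    apply hgc.comp hcm.continuousOn
    · intro p hp
      have h1 : (1:ℝ)/2 ≤ p.1 := hp.1.1
      have h2 : p.1 ≤ 3/4 := hp.1.2
      constructor <;> simp [norm_circleMap_zero, abs_of_pos (by linarith : (0:ℝ) < p.1)] <;> linarith
  have hFint : IntegrableOn F S := by
    refine (hFc.integrableOn_compact hKc).mono_set ?_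
    exact Set.prod_mono Set.Ioo_subset_Icc_self Set.Ioo_subset_Icc_self
  -- polar change of variables
  have hJ : ∫ z in A, ‖g z‖ = ∫ p in S, F p := by
    have hpol := Complex.integral_comp_polarCoord_symm (A.indicator fun z => ‖g z‖)
    rw [integral_indicator hAopen.measurableSet] at hpol
    rw [← hpol]
    have hsub : S ⊆ polarCoord.target := by
      rw [polarCoord_target, hS]
      exact Set.prod_mono (fun x hx => lt_trans (by norm_num) hx.1) subset_rfl
    have hcong : ∀ p ∈ polarCoord.target,
        p.1 • (A.indicator fun z => ‖g z‖) (Complex.polarCoord.symm p)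
          = S.indicator F p := by
      intro p hp
      rw [polarCoord_target] at hp
      have hp1 : 0 < p.1 := hp.1
      by_cases h : p.1 ∈ Set.Ioo (1/2 : ℝ) (3/4)
      · have hmemA : Complex.polarCoord.symm p ∈ A := by
          rw [hA]
          constructor <;> rw [Complex.norm_polarCoord_symm, abs_of_pos hp1]
          exacts [h.1, h.2]
        have hmemS : p ∈ S := ⟨h, hp.2⟩
        rw [Set.indicator_of_mem hmemA, Set.indicator_of_mem hmemS, hF, smul_eq_mul,
          symm_eq_circleMap]
      · have hmemA : Complex.polarCoord.symm p ∉ A := by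
          simp only [hA, Set.mem_setOf_eq, Complex.norm_polarCoord_symm, abs_of_pos hp1]
          exact fun hc1 => h ⟨hc1.1, hc1.2⟩
        have hmemS : p ∉ S := fun hc => h hc.1
        rw [Set.indicator_of_notMem hmemA, Set.indicator_of_notMem hmemS, smul_zero]
    rw [setIntegral_congr_fun polarCoord.open_target.measurableSet hcong,
      setIntegral_indicator (hS ▸ (measurableSet_Ioo.prod measurableSet_Ioo)),
      Set.inter_eq_self_of_subset_right hsub]
  -- iterated integral
  have hiter : ∫ p in S, F p
      = ∫ R in Set.Ioo (1/2 : ℝ) (3/4), ∫ θ in Set.Ioo (-π) π, F (R, θ) := by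
    rw [hS, Measure.volume_eq_prod] at hFint ⊢
    exact setIntegral_prod F hFint
  have hψint : IntegrableOn (fun R => ∫ θ in Set.Ioo (-π) π, F (R, θ))
      (Set.Ioo (1/2 : ℝ) (3/4)) := by
    have h' : Integrable F ((volume.restrict (Set.Ioo (1/2 : ℝ) (3/4))).prod
        (volume.restrict (Set.Ioo (-π) π))) := by
      rw [Measure.prod_restrict, ← Measure.volume_eq_prod]
      exact hFint
    exact h'.integral_prod_left
  -- pointwise lower bound on the inner integral
  have hlow : ∀ R ∈ Set.Ioo (1/2 : ℝ) (3/4),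
      π / 2 * ‖a n‖ ≤ ∫ θ in Set.Ioo (-π) π, F (R, θ) := by
    intro R hR
    have hR0 : 0 < R := lt_trans (by norm_num) hR.1
    have hR1 : R < 1 := lt_trans hR.2 (by norm_num)
    have hφ : ∫ θ in Set.Ioo (-π) π, ‖g (circleMap 0 R θ)‖
        = ∫ θ in (0:ℝ)..2*π, ‖g (circleMap 0 R θ)‖ := by
      have hper : Function.Periodic (fun θ => ‖g (circleMap 0 R θ)‖) (2*π) :=
        fun θ => by simp only [(periodic_circleMap 0 R) θ]
      have h1 : ∫ θ in Set.Ioo (-π) π, ‖g (circleMap 0 R θ)‖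
          = ∫ θ in (-π)..π, ‖g (circleMap 0 R θ)‖ := by
        rw [intervalIntegral.integral_of_le (by linarith [Real.pi_pos]),
          integral_Ioc_eq_integral_Ioo]
      have h2 := hper.intervalIntegral_add_eq (-π) 0
      rw [h1]
      rw [show -π + 2*π = π by ring, show (0:ℝ) + 2*π = 2*π by ring] at h2
      exact h2
    have hkey := key_coeff g a hsum n R hR0 hR1
    have hφnn : 0 ≤ ∫ θ in (0:ℝ)..2*π, ‖g (circleMap 0 R θ)‖ :=
      intervalIntegral.integral_nonneg (by linarith [Real.pi_pos]) (fun θ _ => norm_nonneg _)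
    have hRn : (1:ℝ)/2 ≤ R ^ n := by
      interval_cases n
      · norm_num
      · simpa using hR.1.le
    have hFR : ∫ θ in Set.Ioo (-π) π, F (R, θ)
        = R * ∫ θ in Set.Ioo (-π) π, ‖g (circleMap 0 R θ)‖ := by
      simp only [hF]
      exact integral_const_mul R _
    rw [hFR, hφ]
    set φ := ∫ θ in (0:ℝ)..2*π, ‖g (circleMap 0 R θ)‖ with hφdef
    have hkey' : ‖a n‖ * R ^ n ≤ (2*π)⁻¹ * φ := by
      have := mul_le_mul_of_nonneg_right hkey (le_of_lt (pow_pos hR0 n))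
      rwa [mul_assoc, ← mul_pow, inv_mul_cancel₀ hR0.ne', one_pow, mul_one] at this
    have h3 : π * ‖a n‖ ≤ φ := by
      have h4 : ‖a n‖ * (1/2) ≤ ‖a n‖ * R ^ n :=
        mul_le_mul_of_nonneg_left hRn (norm_nonneg _)
      have h5 := le_trans h4 hkey'
      have hπ := Real.pi_pos
      have h6 := mul_le_mul_of_nonneg_right h5 (by positivity : (0:ℝ) ≤ 2*π)
      have h7 : (2*π)⁻¹ * φ * (2*π) = φ := by field_simp
      rw [h7] at h6
      nlinarith [h6]
    nlinarith [mul_le_mul_of_nonneg_right hR.1.le hφnn,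
      mul_le_mul_of_nonneg_left h3 (by norm_num : (0:ℝ) ≤ 1/2), hφnn, norm_nonneg (a n)]
  have hvol : volume.real (Set.Ioo (1/2 : ℝ) (3/4)) = 1/4 := by
    rw [Real.volume_real_Ioo_of_le (by norm_num)]
    norm_num
  have hge := setIntegral_ge_of_const_le (c := π / 2 * ‖a n‖) measurableSet_Ioo
    (by rw [Real.volume_Ioo]; exact ENNReal.ofReal_ne_top) hlow hψint
  rw [hvol, smul_eq_mul] at hge
  rw [hJ, hiter]
  have hπ3 := Real.pi_gt_three
  nlinarith [hge, norm_nonneg (a n), mul_le_mul_of_nonneg_right hπ3.le (norm_nonneg (a n))]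

private lemma int_gI (g : ℂ → ℂ)
    (hg : DifferentiableOn ℂ g {z : ℂ | 0 < ‖z‖ ∧ ‖z‖ < 1})
    (hint4 : Integrable (fun z => ‖g z‖ ^ 4 * ‖z‖ ^ 2)
      (volume.restrict {z : ℂ | 0 < ‖z‖ ∧ ‖z‖ < 1})) :
    Integrable (fun z => ‖g z‖ * ‖z‖ ^ 2)
      (volume.restrict {z : ℂ | 0 < ‖z‖ ∧ ‖z‖ < 1}) := by
  set D : Set ℂ := {z : ℂ | 0 < ‖z‖ ∧ ‖z‖ < 1} with hD
  have hDopen : IsOpen D := by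
    rw [hD, Set.setOf_and]
    exact (isOpen_lt continuous_const continuous_norm).inter
      (isOpen_lt continuous_norm continuous_const)
  have hDmeas : MeasurableSet D := hDopen.measurableSet
  have hDsub : D ⊆ Metric.closedBall (0 : ℂ) 1 := by
    intro z hz
    rw [Metric.mem_closedBall, Complex.dist_eq, sub_zero]
    exact hz.2.le
  have h2 : Integrable (fun z : ℂ => 3/4 * ‖z‖ ^ 2) (volume.restrict D) := by
    have hc : Continuous fun z : ℂ => 3/4 * ‖z‖ ^ 2 :=
      continuous_const.mul (continuous_norm.pow 2)
    exact (hc.continuousOn.integrableOn_compact (isCompact_closedBall 0 1)).mono_set hDsub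
  have hmaj : Integrable (fun z : ℂ => ‖g z‖ ^ 4 * ‖z‖ ^ 2 / 4
      + 3/4 * ‖z‖ ^ 2) (volume.restrict D) := (hint4.div_const 4).add h2
  have hcont : ContinuousOn (fun z : ℂ => ‖g z‖ * ‖z‖ ^ 2) D :=
    (continuous_norm.comp_continuousOn hg.continuousOn).mul
      ((continuous_norm.pow 2).continuousOn)
  refine hmaj.mono' (hcont.aestronglyMeasurable hDmeas) ?_
  rw [ae_restrict_iff' hDmeas]
  filter_upwards with z hz
  have ht : (0:ℝ) ≤ ‖g z‖ := norm_nonneg _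
  have hs : (0:ℝ) ≤ ‖z‖ ^ 2 := sq_nonneg _
  rw [Real.norm_eq_abs, _root_.abs_of_nonneg (mul_nonneg ht hs)]
  set t := ‖g z‖
  set s := ‖z‖ ^ 2
  have hkey : 0 ≤ t^4 - 4*t + 3 := by nlinarith [sq_nonneg (t^2-1), sq_nonneg (t-1)]
  nlinarith [mul_nonneg hkey hs]

private lemma main_bound (g : ℂ → ℂ) (a : ℕ → ℂ)
    (hg : DifferentiableOn ℂ g {z : ℂ | 0 < ‖z‖ ∧ ‖z‖ < 1})
    (hint4 : Integrable (fun z => ‖g z‖ ^ 4 * ‖z‖ ^ 2)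
      (volume.restrict {z : ℂ | 0 < ‖z‖ ∧ ‖z‖ < 1}))
    (hsum : ∀ z ∈ {z : ℂ | 0 < ‖z‖ ∧ ‖z‖ < 1},
      HasSum (fun n : ℕ => a n * z ^ n) (g z))
    {n : ℕ} (hn : n ≤ 1) :
    ‖a n‖ ≤ 12 * ∫ z in {z : ℂ | 0 < ‖z‖ ∧ ‖z‖ < 1},
      ‖g z‖ * ‖z‖ ^ 2 := by
  set D : Set ℂ := {z : ℂ | 0 < ‖z‖ ∧ ‖z‖ < 1} with hD
  set A : Set ℂ := {z : ℂ | 1/2 < ‖z‖ ∧ ‖z‖ < 3/4} with hA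
  have hAopen : IsOpen A := by
    rw [hA, Set.setOf_and]
    exact (isOpen_lt continuous_const continuous_norm).inter
      (isOpen_lt continuous_norm continuous_const)
  have hAD : A ⊆ D := by
    intro z hz
    exact ⟨lt_trans (by norm_num) hz.1, lt_trans hz.2 (by norm_num)⟩
  have hI := int_gI g hg hint4
  have hIon : IntegrableOn (fun z : ℂ => ‖g z‖ * ‖z‖ ^ 2) D := hI
  -- the compact annulus
  set K2 : Set ℂ := Metric.closedBall (0:ℂ) (3/4) ∩ (Metric.ball (0:ℂ) (1/2))ᶜ with hK2
  have hK2c : IsCompact K2 := (isCompact_closedBall _ _).inter_right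
    (Metric.isOpen_ball).isClosed_compl
  have hK2D : K2 ⊆ D := by
    intro z hz
    obtain ⟨h1, h2⟩ := hz
    rw [Metric.mem_closedBall, Complex.dist_eq, sub_zero] at h1
    rw [Set.mem_compl_iff, Metric.mem_ball, Complex.dist_eq, sub_zero, not_lt] at h2
    exact ⟨lt_of_lt_of_le (by norm_num) h2, lt_of_le_of_lt h1 (by norm_num)⟩
  have hAK2 : A ⊆ K2 := by
    intro z hz
    constructor
    · rw [Metric.mem_closedBall, Complex.dist_eq, sub_zero]; exact hz.2.le
    · rw [Set.mem_compl_iff, Metric.mem_ball, Complex.dist_eq, sub_zero, not_lt]; exact hz.1.le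
  have hintA1 : IntegrableOn (fun z : ℂ => ‖g z‖) A := by
    refine (((continuous_norm.comp_continuousOn
      (hg.continuousOn.mono hK2D)).integrableOn_compact hK2c)).mono_set hAK2
  have hintA2 : IntegrableOn (fun z : ℂ => 4 * (‖g z‖ * ‖z‖ ^ 2)) A :=
    (hIon.mono_set hAD).const_mul 4
  have h2 : ∫ z in A, ‖g z‖
      ≤ ∫ z in A, 4 * (‖g z‖ * ‖z‖ ^ 2) := by
    refine setIntegral_mono_on hintA1 hintA2 hAopen.measurableSet ?_
    intro z hz
    have hs : (1:ℝ)/4 ≤ ‖z‖ ^ 2 := by nlinarith [hz.1]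
    have ht : (0:ℝ) ≤ ‖g z‖ := norm_nonneg _
    nlinarith [mul_le_mul_of_nonneg_left hs ht]
  have h3 : ∫ z in A, 4 * (‖g z‖ * ‖z‖ ^ 2)
      ≤ 4 * ∫ z in D, ‖g z‖ * ‖z‖ ^ 2 := by
    rw [integral_const_mul]
    have h4 : ∫ z in A, ‖g z‖ * ‖z‖ ^ 2
        ≤ ∫ z in D, ‖g z‖ * ‖z‖ ^ 2 := by
      refine setIntegral_mono_set hIon ?_ (HasSubset.Subset.eventuallyLE hAD)
      filter_upwards with z
      positivity
    linarith
  have h1 := coeff_le g a hg hsum hn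
  calc ‖a n‖ ≤ 3 * ∫ z in A, ‖g z‖ := h1
    _ ≤ 3 * ∫ z in A, 4 * (‖g z‖ * ‖z‖ ^ 2) := by linarith
    _ ≤ 3 * (4 * ∫ z in D, ‖g z‖ * ‖z‖ ^ 2) := by linarith
    _ = 12 * ∫ z in D, ‖g z‖ * ‖z‖ ^ 2 := by ring

private lemma pt_bound (g : ℂ → ℂ) (a : ℕ → ℂ)
    (hg : DifferentiableOn ℂ g {z : ℂ | 0 < ‖z‖ ∧ ‖z‖ < 1})
    (hint4 : Integrable (fun z => ‖g z‖ ^ 4 * ‖z‖ ^ 2)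
      (volume.restrict {z : ℂ | 0 < ‖z‖ ∧ ‖z‖ < 1}))
    (hsum : ∀ z ∈ {z : ℂ | 0 < ‖z‖ ∧ ‖z‖ < 1},
      HasSum (fun n : ℕ => a n * z ^ n) (g z))
    {z : ℂ} (hz1 : ‖z‖ ≤ 1) :
    ‖a 0 + (3/4 : ℂ) * a 1 * z‖
      ≤ 24 * ∫ z in {z : ℂ | 0 < ‖z‖ ∧ ‖z‖ < 1},
        ‖g z‖ * ‖z‖ ^ 2 := by
  have h0 := main_bound g a hg hint4 hsum (by norm_num : (0:ℕ) ≤ 1)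
  have h1 := main_bound g a hg hint4 hsum (le_refl 1)
  have habs34 : ‖(3/4 : ℂ)‖ = 3/4 := by
    rw [show ((3/4 : ℂ)) = ((3/4 : ℝ) : ℂ) by norm_num, Complex.norm_real, Real.norm_eq_abs]
    norm_num
  have hchain : ‖a 0 + (3/4 : ℂ) * a 1 * z‖
      ≤ ‖a 0‖ + 3/4 * (‖a 1‖ * ‖z‖) := by
    calc ‖a 0 + (3/4 : ℂ) * a 1 * z‖
        ≤ ‖a 0‖ + ‖(3/4 : ℂ) * a 1 * z‖ := norm_add_le _ _
      _ = ‖a 0‖ + 3/4 * (‖a 1‖ * ‖z‖) := by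
          rw [norm_mul, norm_mul, habs34]; ring
  have hmz : ‖a 1‖ * ‖z‖ ≤ ‖a 1‖ :=
    mul_le_of_le_one_right (norm_nonneg _) hz1
  linarith [norm_nonneg (a 0)]



/-- The square of the Friedrichs operator on `A⁴(𝔻*, |z|²)`. For
`g(z) = Σ_{n≥0} a_n z^n` in `A⁴(𝔻*, |z|²)` (no `z⁻¹` term occurs since
`1/z ∉ L⁴(𝔻*, |z|² dA)`), applying the Friedrichs rule
`h ↦ (conj b₁/2) z⁻¹ + conj b₀ + (3 conj b₋₁/2) z` twice gives
`F²(g)(z) = a₀ + (3/4) a₁ z`, and for every `p ∈ [4, ∞)` (and `p = ∞`)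
`‖F²(g)‖_{L^p(𝔻*, |z|² dA)} ≤ C_p ∫_{𝔻*} |g| |z|² dA`. -/
theorem stmt_16 (D : Set ℂ) (hD : D = {z : ℂ | 0 < ‖z‖ ∧ ‖z‖ < 1}) :
    -- the composition formula: the coefficients of F(g) are b₋₁ = conj a₁ / 2,
    -- b₀ = conj a₀, b₁ = (3/2)·conj a₋₁ = 0, and applying F once more yields
    -- F²(g)(z) = a₀ + (3/4) a₁ z
    (∀ (a : ℕ → ℂ) (z : ℂ),
      (starRingEnd ℂ) ((3 / 2 : ℂ) * (starRingEnd ℂ) 0) / 2 * z⁻¹ +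
          (starRingEnd ℂ) ((starRingEnd ℂ) (a 0)) +
          3 * (starRingEnd ℂ) ((starRingEnd ℂ) (a 1) / 2) / 2 * z =
        a 0 + (3 / 4 : ℂ) * a 1 * z) ∧
    -- the L^p bounds, 4 ≤ p < ∞
    (∀ p : ℝ, 4 ≤ p → ∃ C : ℝ, 0 < C ∧
      ∀ (g : ℂ → ℂ) (a : ℕ → ℂ),
        DifferentiableOn ℂ g D →
        Integrable (fun z => ‖g z‖ ^ 4 * ‖z‖ ^ 2) (volume.restrict D) →
        (∀ z ∈ D, HasSum (fun n : ℕ => a n * z ^ n) (g z)) →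
        (∫⁻ z in D, ENNReal.ofReal
            (‖a 0 + (3 / 4 : ℂ) * a 1 * z‖ ^ p * ‖z‖ ^ 2)) ^ (1 / p) ≤
          ENNReal.ofReal (C * ∫ z in D, ‖g z‖ * ‖z‖ ^ 2)) ∧
    -- the sup-norm bound, p = ∞
    (∃ C : ℝ, 0 < C ∧
      ∀ (g : ℂ → ℂ) (a : ℕ → ℂ),
        DifferentiableOn ℂ g D →
        Integrable (fun z => ‖g z‖ ^ 4 * ‖z‖ ^ 2) (volume.restrict D) →
        (∀ z ∈ D, HasSum (fun n : ℕ => a n * z ^ n) (g z)) →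
        ∀ z ∈ D, ‖a 0 + (3 / 4 : ℂ) * a 1 * z‖ ≤
          C * ∫ z in D, ‖g z‖ * ‖z‖ ^ 2) := by
  subst hD
  have hDmeas : MeasurableSet {z : ℂ | 0 < ‖z‖ ∧ ‖z‖ < 1} := by
    rw [Set.setOf_and]
    exact ((isOpen_lt continuous_const continuous_norm).inter
      (isOpen_lt continuous_norm continuous_const)).measurableSet
  refine ⟨?_, ?_, ?_⟩
  · intro a z
    simp only [map_zero, mul_zero, zero_div, zero_mul, zero_add, Complex.conj_conj,
      map_mul, map_div₀, map_ofNat, map_one]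
    ring
  · intro p hp
    refine ⟨48, by norm_num, ?_⟩
    intro g a hg hint4 hsum
    set I := ∫ z in {z : ℂ | 0 < ‖z‖ ∧ ‖z‖ < 1},
      ‖g z‖ * ‖z‖ ^ 2 with hIdef
    have hI0 : 0 ≤ I := by
      rw [hIdef]
      refine setIntegral_nonneg hDmeas fun z _ => by positivity
    have h24 : (0:ℝ) ≤ 24 * I := by linarith
    have hp0 : (0:ℝ) < p := by linarith
    have hvol : volume {z : ℂ | 0 < ‖z‖ ∧ ‖z‖ < 1}
        ≤ ENNReal.ofReal 4 := by
      have hsub : {z : ℂ | 0 < ‖z‖ ∧ ‖z‖ < 1} ⊆ Metric.ball (0:ℂ) 1 := by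
        intro z hz
        rw [Metric.mem_ball, Complex.dist_eq, sub_zero]
        exact hz.2
      calc volume {z : ℂ | 0 < ‖z‖ ∧ ‖z‖ < 1}
          ≤ volume (Metric.ball (0:ℂ) 1) := measure_mono hsub
        _ = ENNReal.ofReal 1 ^ 2 * NNReal.pi := Complex.volume_ball 0 1
        _ = (NNReal.pi : ℝ≥0∞) := by simp
        _ = ENNReal.ofReal π := by
            rw [← NNReal.coe_real_pi, ENNReal.ofReal_coe_nnreal]
        _ ≤ ENNReal.ofReal 4 := ENNReal.ofReal_le_ofReal (by linarith [Real.pi_le_four])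
    have hle1 : (∫⁻ z in {z : ℂ | 0 < ‖z‖ ∧ ‖z‖ < 1}, ENNReal.ofReal
          (‖a 0 + (3 / 4 : ℂ) * a 1 * z‖ ^ p * ‖z‖ ^ 2))
        ≤ ∫⁻ _ in {z : ℂ | 0 < ‖z‖ ∧ ‖z‖ < 1},
          ENNReal.ofReal ((24 * I) ^ p) := by
      refine lintegral_mono_ae ((ae_restrict_iff' hDmeas).mpr ?_)
      filter_upwards with z hz
      apply ENNReal.ofReal_le_ofReal
      have h1 : ‖a 0 + (3 / 4 : ℂ) * a 1 * z‖ ≤ 24 * I :=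
        pt_bound g a hg hint4 hsum hz.2.le
      have h2 : ‖a 0 + (3 / 4 : ℂ) * a 1 * z‖ ^ p ≤ (24 * I) ^ p :=
        Real.rpow_le_rpow (norm_nonneg _) h1 hp0.le
      have h3 : ‖z‖ ^ 2 ≤ 1 := by nlinarith [hz.2, norm_nonneg z]
      calc ‖a 0 + (3 / 4 : ℂ) * a 1 * z‖ ^ p * ‖z‖ ^ 2
          ≤ (24 * I) ^ p * 1 := by
            apply mul_le_mul h2 h3 (sq_nonneg _) (Real.rpow_nonneg h24 p)
        _ = (24 * I) ^ p := mul_one _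
    calc (∫⁻ z in {z : ℂ | 0 < ‖z‖ ∧ ‖z‖ < 1}, ENNReal.ofReal
          (‖a 0 + (3 / 4 : ℂ) * a 1 * z‖ ^ p * ‖z‖ ^ 2)) ^ (1/p)
        ≤ (∫⁻ _ in {z : ℂ | 0 < ‖z‖ ∧ ‖z‖ < 1},
            ENNReal.ofReal ((24 * I) ^ p)) ^ (1/p) :=
          ENNReal.rpow_le_rpow hle1 (by positivity)
      _ = (ENNReal.ofReal ((24 * I) ^ p)
            * volume {z : ℂ | 0 < ‖z‖ ∧ ‖z‖ < 1}) ^ (1/p) := by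
          rw [setLIntegral_const]
      _ ≤ (ENNReal.ofReal ((24 * I) ^ p) * ENNReal.ofReal 4) ^ (1/p) :=
          ENNReal.rpow_le_rpow (mul_le_mul_right hvol _) (by positivity)
      _ = (ENNReal.ofReal (24 * I)) ^ (p * (1/p)) * (ENNReal.ofReal 4) ^ (1/p) := by
          rw [← ENNReal.ofReal_rpow_of_nonneg h24 hp0.le,
            ENNReal.mul_rpow_of_nonneg _ _ (by positivity), ENNReal.rpow_mul]
      _ = (ENNReal.ofReal (24 * I)) * (ENNReal.ofReal 4) ^ (1/p) := by
          rw [mul_one_div_cancel hp0.ne', ENNReal.rpow_one]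
      _ ≤ (ENNReal.ofReal (24 * I)) * ENNReal.ofReal 2 := by
          apply mul_le_mul_right
          calc (ENNReal.ofReal 4) ^ (1/p)
              ≤ (ENNReal.ofReal 4) ^ ((1:ℝ)/2) :=
                ENNReal.rpow_le_rpow_of_exponent_le
                  (ENNReal.one_le_ofReal.mpr (by norm_num))
                  (by rw [div_le_div_iff₀ hp0 (by norm_num)]; linarith)
            _ = ENNReal.ofReal (4 ^ ((1:ℝ)/2)) :=
                ENNReal.ofReal_rpow_of_nonneg (by norm_num) (by norm_num)
            _ = ENNReal.ofReal 2 := by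
                congr 1
                rw [show (4:ℝ) = 2^(2:ℕ) by norm_num, ← Real.rpow_natCast,
                  ← Real.rpow_mul (by norm_num)]
                norm_num
      _ = ENNReal.ofReal (48 * I) := by
          rw [← ENNReal.ofReal_mul h24]
          congr 1
          ring
  · refine ⟨24, by norm_num, ?_⟩
    intro g a hg hint4 hsum z hz
    exact pt_bound g a hg hint4 hsum hz.2.le
end

section
/- Let f be a bounded holomorphic function on ℍ_∞ = {(z₁,z₂) : |z₁| < e^{-1/|z₂|}, 0 < |z₂| < 1} with Laurent coefficients a_{(0,α₂)} (α₂ ∈ ℤ) in z₂ of the slice z₁ = 0 direction. Then for every α₂ ∈ ℤ, |a_{(0,α₂)}| ≤ C·(Ĩ(α₂+1))^{-1}·‖f‖_{L^∞}, where Ĩ(x) = ∫₀¹ r^x e^{-2/r} dr and C is an absolute constant. -/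
open MeasureTheory Complex Real

-- orthogonality
lemma orth (k : ℤ) :
    (∫ θ : ℝ in Set.Ioc (0:ℝ) (2*π), Complex.exp ((k * I) * θ)) =
      if k = 0 then ((2*π : ℝ) : ℂ) else 0 := by
  rw [← intervalIntegral.integral_of_le (by positivity : (0:ℝ) ≤ 2*π)]
  rcases eq_or_ne k 0 with hk | hk
  · simp [hk]
  · rw [integral_exp_mul_complex (by simp [hk, Complex.ext_iff] : (k*I : ℂ) ≠ 0)]
    have : Complex.exp ((k*I) * (2*π:ℝ)) = 1 := by
      rw [show ((k:ℂ)*I) * ((2*π:ℝ):ℂ) = (k:ℂ) * (2*π*I) by push_cast; ring]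
      exact Complex.exp_int_mul_two_pi_mul_I k
    push_cast at this
    simp [hk, this]

lemma coeff_bound_s18 {c : ℤ → ℂ} {g : ℝ → ℂ} {M r : ℝ} (hr0 : 0 < r)
    (hcont : Continuous g)
    (hM : ∀ θ : ℝ, ‖g θ‖ ≤ M)
    (hsum : ∀ θ : ℝ, HasSum (fun n : ℤ => c n * ((r:ℂ) * Complex.exp (θ * I)) ^ n) (g θ))
    (m : ℤ) : ‖c m‖ * r ^ m ≤ M := by
  set F : ℤ → ℝ → ℂ := fun n θ => c n * (r:ℂ)^n * Complex.exp ((((n - m : ℤ)) * I) * θ) with hF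
  have key : ∀ (n : ℤ) (θ : ℝ),
      c n * ((r:ℂ) * Complex.exp (θ*I)) ^ n * Complex.exp ((-m * I) * θ) = F n θ := by
    intro n θ
    rw [hF, mul_zpow, ← Complex.exp_int_mul,
      show c n * ((r:ℂ)^n * Complex.exp (n*((θ:ℂ)*I))) * Complex.exp ((-m*I)*θ)
        = c n * (r:ℂ)^n * (Complex.exp (n*((θ:ℂ)*I)) * Complex.exp ((-m*I)*θ)) from by ring,
      ← Complex.exp_add]
    congr 2
    push_cast
    ring
  have hS0 : Summable (fun n : ℤ => c n * (r:ℂ)^n) := by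
    have := (hsum 0).summable
    simpa using this
  have hS : Summable (fun n : ℤ => ‖c n‖ * r ^ n) := by
    have := summable_norm_iff.mpr hS0
    simpa [norm_mul, norm_zpow, Complex.norm_real, Real.norm_eq_abs,
      abs_of_pos hr0] using this
  have hnorm : ∀ (n : ℤ) (θ : ℝ), ‖F n θ‖ = ‖c n‖ * r ^ n := by
    intro n θ
    simp [hF, norm_mul, norm_zpow, Complex.norm_real, Real.norm_eq_abs, abs_of_pos hr0,
      Complex.norm_exp]
  have hFint : ∀ n : ℤ, Integrable (F n) (volume.restrict (Set.Ioc (0:ℝ) (2*π))) := by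
    intro n
    exact (continuous_const.mul
      ((continuous_const.mul Complex.continuous_ofReal).cexp)).integrableOn_Ioc
  have hvol : (volume (Set.Ioc (0:ℝ) (2*π))).toReal = 2*π := by
    rw [Real.volume_Ioc, sub_zero, ENNReal.toReal_ofReal (by positivity)]
  have hFsum : Summable (fun n : ℤ => ∫ θ in Set.Ioc (0:ℝ) (2*π), ‖F n θ‖) := by
    have heq : (fun n : ℤ => ∫ θ in Set.Ioc (0:ℝ) (2*π), ‖F n θ‖)
        = fun n => (‖c n‖ * r ^ n) * (2*π) := by
      ext n
      simp only [hnorm]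
      rw [setIntegral_const, measureReal_def, hvol, smul_eq_mul, mul_comm]
    rw [heq]
    exact hS.mul_right _
  have interchange : ∑' n : ℤ, (∫ θ in Set.Ioc (0:ℝ) (2*π), F n θ)
      = ∫ θ in Set.Ioc (0:ℝ) (2*π), g θ * Complex.exp ((-m * I) * θ) := by
    rw [MeasureTheory.integral_tsum_of_summable_integral_norm hFint hFsum]
    refine integral_congr_ae (Filter.Eventually.of_forall fun θ => ?_)
    show (∑' (i : ℤ), F i θ) = g θ * Complex.exp ((-m*I)*(θ:ℂ))
    have h2 := ((hsum θ).mul_right (Complex.exp ((-m*I)*(θ:ℂ)))).tsum_eq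
    rw [← h2]
    exact tsum_congr fun n => (key n θ).symm
  have hint : ∀ n : ℤ, (∫ θ in Set.Ioc (0:ℝ) (2*π), F n θ)
      = if n = m then c m * (r:ℂ)^m * ((2*π:ℝ):ℂ) else 0 := by
    intro n
    rw [hF]
    simp only
    rw [MeasureTheory.integral_const_mul, orth (n - m)]
    rcases eq_or_ne n m with h | h
    · simp [h]
    · simp [sub_eq_zero, h]
  have htsum : ∑' n : ℤ, (∫ θ in Set.Ioc (0:ℝ) (2*π), F n θ)
      = c m * (r:ℂ)^m * ((2*π:ℝ):ℂ) := by
    rw [tsum_eq_single m]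
    · rw [hint m, if_pos rfl]
    · intro n hn
      rw [hint n, if_neg hn]
  have hbound : ‖∫ θ in Set.Ioc (0:ℝ) (2*π), g θ * Complex.exp ((-m*I)*θ)‖ ≤ M * (2*π) := by
    have hb := norm_setIntegral_le_of_norm_le_const (μ := volume) (s := Set.Ioc (0:ℝ) (2*π)) (C := M)
      (f := fun θ : ℝ => g θ * Complex.exp ((-m*I)*θ))
      (by rw [Real.volume_Ioc]; exact ENNReal.ofReal_lt_top)
      (fun θ _ => by
        rw [norm_mul]
        have he : ‖Complex.exp ((-m*I)*(θ:ℂ))‖ = 1 := by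
          rw [Complex.norm_exp]
          simp
        rw [he, mul_one]
        exact hM θ)
    rwa [measureReal_def, hvol] at hb
  have hfin : ‖c m‖ * r ^ m * (2*π) ≤ M * (2*π) := by
    have : ‖c m‖ * r ^ m * (2*π) = ‖c m * (r:ℂ)^m * ((2*π:ℝ):ℂ)‖ := by
      simp [norm_mul, norm_zpow, Complex.norm_real, Real.norm_eq_abs, abs_of_pos hr0,
        abs_of_pos Real.two_pi_pos, abs_of_pos Real.pi_pos]
    rw [this, ← htsum, interchange]
    exact hbound
  exact le_of_mul_le_mul_right hfin Real.two_pi_pos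

lemma Iint_nonneg (x : ℝ) : 0 ≤ ∫ r in Set.Ioc (0:ℝ) 1, r ^ x * Real.exp (-2 / r) :=
  setIntegral_nonneg measurableSet_Ioc fun r hr =>
    mul_nonneg (Real.rpow_nonneg hr.1.le x) (Real.exp_nonneg _)

lemma Iint_bd {x : ℝ} (hx : 0 ≤ x) : ∀ r ∈ Set.Ioc (0:ℝ) 1, r ^ x * Real.exp (-2 / r) ≤ 1 := by
  intro r hr
  have h1 : r ^ x ≤ 1 := Real.rpow_le_one hr.1.le hr.2 hx
  have h2 : Real.exp (-2 / r) ≤ 1 := by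
    rw [Real.exp_le_one_iff]
    exact div_nonpos_of_nonpos_of_nonneg (by norm_num) hr.1.le
  calc r ^ x * Real.exp (-2 / r) ≤ 1 * 1 :=
        mul_le_mul h1 h2 (Real.exp_nonneg _) zero_le_one
    _ = 1 := by ring

lemma Iint_integrable {x : ℝ} (hx : 0 ≤ x) :
    IntegrableOn (fun r : ℝ => r ^ x * Real.exp (-2 / r)) (Set.Ioc (0:ℝ) 1) := by
  have hmeas : AEStronglyMeasurable (fun r : ℝ => r ^ x * Real.exp (-2/r))
      (volume.restrict (Set.Ioc (0:ℝ) 1)) := by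
    refine ContinuousOn.aestronglyMeasurable ?_ measurableSet_Ioc
    intro r hr
    exact ((Real.continuousAt_rpow_const r x (Or.inl hr.1.ne')).mul
      (Real.continuous_exp.continuousAt.comp
        (continuousAt_const.div continuousAt_id hr.1.ne'))).continuousWithinAt
  refine Integrable.mono' (g := fun _ => (1:ℝ))
    ((integrableOn_const_iff (C := (1:ℝ))).mpr (Or.inr (by simp))) hmeas ?_
  refine (ae_restrict_iff' measurableSet_Ioc).2 (Filter.Eventually.of_forall fun r hr => ?_)
  rw [Real.norm_eq_abs,
    _root_.abs_of_nonneg (mul_nonneg (Real.rpow_nonneg hr.1.le x) (Real.exp_nonneg _))]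
  exact Iint_bd hx r hr

lemma Iint_le_one {x : ℝ} (hx : 0 ≤ x) :
    (∫ r in Set.Ioc (0:ℝ) 1, r ^ x * Real.exp (-2 / r)) ≤ 1 := by
  have h := setIntegral_mono_on (Iint_integrable hx)
    ((integrableOn_const_iff (C := (1:ℝ))).mpr (Or.inr (by simp)))
    measurableSet_Ioc (Iint_bd hx)
  calc (∫ r in Set.Ioc (0:ℝ) 1, r ^ x * Real.exp (-2 / r))
      ≤ ∫ _ in Set.Ioc (0:ℝ) 1, (1:ℝ) := h
    _ = 1 := by simp

lemma Iint_pos {x : ℝ} (hx : 0 ≤ x) :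
    0 < ∫ r in Set.Ioc (0:ℝ) 1, r ^ x * Real.exp (-2 / r) := by
  set c : ℝ := (1/2 : ℝ) ^ x * Real.exp (-4) with hc
  have hcpos : 0 < c := mul_pos (Real.rpow_pos_of_pos (by norm_num) x) (Real.exp_pos _)
  have hsub : Set.Ioc (1/2 : ℝ) 1 ⊆ Set.Ioc (0:ℝ) 1 :=
    Set.Ioc_subset_Ioc (by norm_num) le_rfl
  have hlow : ∀ r ∈ Set.Ioc (1/2 : ℝ) 1, c ≤ r ^ x * Real.exp (-2 / r) := by
    intro r hr
    have hr0 : (0:ℝ) < r := lt_trans (by norm_num) hr.1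
    have h1 : (1/2 : ℝ) ^ x ≤ r ^ x := Real.rpow_le_rpow (by norm_num) hr.1.le hx
    have h2 : Real.exp (-4) ≤ Real.exp (-2 / r) := by
      rw [Real.exp_le_exp]
      rw [neg_div, neg_le_neg_iff, div_le_iff₀ hr0]
      nlinarith [hr.1]
    exact mul_le_mul h1 h2 (Real.exp_nonneg _) (Real.rpow_nonneg hr0.le x)
  have step1 : (∫ r in Set.Ioc (1/2 : ℝ) 1, r ^ x * Real.exp (-2 / r))
      ≤ ∫ r in Set.Ioc (0:ℝ) 1, r ^ x * Real.exp (-2 / r) := by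
    refine setIntegral_mono_set (Iint_integrable hx) ?_ (HasSubset.Subset.eventuallyLE hsub)
    refine (ae_restrict_iff' measurableSet_Ioc).2 (Filter.Eventually.of_forall fun r hr => ?_)
    exact mul_nonneg (Real.rpow_nonneg hr.1.le x) (Real.exp_nonneg _)
  have step2 : (1/2 : ℝ) * c ≤ ∫ r in Set.Ioc (1/2 : ℝ) 1, r ^ x * Real.exp (-2 / r) := by
    have h := setIntegral_mono_on ((integrableOn_const_iff (C := c)).mpr (Or.inr (by simp)))
      ((Iint_integrable hx).mono_set hsub) measurableSet_Ioc hlow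
    calc (1/2 : ℝ) * c = ∫ _ in Set.Ioc (1/2 : ℝ) 1, c := by
          rw [setIntegral_const, measureReal_def, Real.volume_Ioc, ENNReal.toReal_ofReal (by norm_num), smul_eq_mul]
          norm_num
      _ ≤ _ := h
  linarith [mul_pos (by norm_num : (0:ℝ) < 1/2) hcpos]




/-- Coefficient bounds on the exponential Hartogs triangle `ℍ_∞`: there is an absolute
constant `C > 0` such that for every bounded holomorphic `f` on `ℍ_∞` with expansion
`f(z) = Σ_{α₁ ≥ 0, α₂ ∈ ℤ} a_α z₁^{α₁} z₂^{α₂}` and bound `M`, one has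
`|a_{(0,α₂)}| ≤ C (Ĩ(α₂+1))⁻¹ M`, where `Ĩ(x) = ∫₀¹ r^x e^{-2/r} dr`. -/
theorem stmt_18 (H : Set (ℂ × ℂ))
    (hH : H = {z : ℂ × ℂ | ‖z.1‖ < Real.exp (-1 / ‖z.2‖) ∧
      0 < ‖z.2‖ ∧ ‖z.2‖ < 1}) :
    ∃ C : ℝ, 0 < C ∧
      ∀ (f : ℂ × ℂ → ℂ) (a : ℕ × ℤ → ℂ) (M : ℝ),
        DifferentiableOn ℂ f H →
        (∀ z ∈ H, ‖f z‖ ≤ M) →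
        (∀ z ∈ H, HasSum (fun α : ℕ × ℤ => a α * z.1 ^ α.1 * z.2 ^ α.2) (f z)) →
        ∀ α₂ : ℤ, ‖a (0, α₂)‖ ≤
          C * (∫ r in Set.Ioc (0 : ℝ) 1, r ^ ((α₂ : ℝ) + 1) * Real.exp (-2 / r))⁻¹ * M := by
  refine ⟨1, one_pos, ?_⟩
  intro f a M hdf hbM hsums α₂
  have habs0 : ∀ r : ℝ, 0 < r → ∀ θ : ℝ, ‖(r:ℂ) * Complex.exp ((θ:ℂ)*I)‖ = r := by
    intro r h0 θ
    rw [norm_mul, Complex.norm_real, Real.norm_eq_abs, _root_.abs_of_pos h0, Complex.norm_exp]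
    simp
  have hmem : ∀ (r : ℝ), 0 < r → r < 1 → ∀ θ : ℝ,
      (((0:ℂ), (r:ℂ) * Complex.exp ((θ:ℂ)*I)) : ℂ × ℂ) ∈ H := by
    intro r h0 h1 θ
    rw [hH]
    refine ⟨?_, ?_, ?_⟩
    · simpa using Real.exp_pos _
    · simpa [habs0 r h0 θ] using h0.ne'
    · simpa [habs0 r h0 θ, abs_of_pos h0] using h1
  have hhalf : (((0:ℂ), ((1/2 : ℝ):ℂ) * Complex.exp (((0:ℝ):ℂ)*I)) : ℂ × ℂ) ∈ H :=
    hmem (1/2) (by norm_num) (by norm_num) 0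
  have hM0 : 0 ≤ M := le_trans (norm_nonneg _) (hbM _ hhalf)
  -- coefficient bound at each radius
  have hcb : ∀ r : ℝ, 0 < r → r < 1 → ‖a (0, α₂)‖ * r ^ α₂ ≤ M := by
    intro r h0 h1
    refine coeff_bound_s18 (c := fun n => a (0, n))
      (g := fun θ : ℝ => f ((0:ℂ), (r:ℂ) * Complex.exp ((θ:ℂ)*I))) h0 ?_ ?_ ?_ α₂
    · refine (hdf.continuousOn).comp_continuous ?_ (fun θ => hmem r h0 h1 θ)
      exact continuous_const.prodMk
        (continuous_const.mul ((Complex.continuous_ofReal.mul continuous_const).cexp))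
    · intro θ
      exact hbM _ (hmem r h0 h1 θ)
    · intro θ
      have h := hsums _ (hmem r h0 h1 θ)
      have hinj : Function.Injective (fun n : ℤ => ((0, n) : ℕ × ℤ)) := by
        intro x y hxy
        simpa using hxy
    
      have hz : ∀ α : ℕ × ℤ, α ∉ Set.range (fun n : ℤ => ((0, n) : ℕ × ℤ)) →
          a α * ((0:ℂ), (r:ℂ) * Complex.exp ((θ:ℂ)*I)).1 ^ α.1
            * ((0:ℂ), (r:ℂ) * Complex.exp ((θ:ℂ)*I)).2 ^ α.2 = 0 := by
        intro α hα
        have h1' : α.1 ≠ 0 := by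
          intro hc
          exact hα ⟨α.2, by rw [← hc]⟩
        simp [zero_pow h1']
      have h2 := (hinj.hasSum_iff hz).2 h
      convert h2 using 1
      funext n
      simp [Function.comp]
  rcases le_or_gt 0 α₂ with hα | hα
  · -- nonnegative case
    have habs : ‖a (0, α₂)‖ ≤ M := by
      have hc1 : ContinuousAt (fun r : ℝ => r ^ α₂) 1 :=
        continuousAt_zpow₀ (1:ℝ) α₂ (Or.inl one_ne_zero)
      have ht : Filter.Tendsto (fun r : ℝ => ‖a (0, α₂)‖ * r ^ α₂)
          (nhdsWithin 1 (Set.Iio 1)) (nhds (‖a (0, α₂)‖)) := by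
        have h5 := ((hc1.tendsto.mono_left (nhdsWithin_le_nhds
          (s := Set.Iio (1:ℝ)))).const_mul (‖a (0, α₂)‖))
        simpa using h5
      refine le_of_tendsto ht ?_
      filter_upwards [Ioo_mem_nhdsLT_of_mem
        (by norm_num : (1:ℝ) ∈ Set.Ioc (0:ℝ) 1)] with r hr
      exact hcb r hr.1 hr.2
    have hx : (0:ℝ) ≤ (α₂ : ℝ) + 1 := by
      have : (0:ℝ) ≤ (α₂ : ℝ) := by exact_mod_cast hα
      linarith
    have hIpos := Iint_pos hx
    have hIle := Iint_le_one hx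
    have hinv : 1 ≤ (∫ r in Set.Ioc (0 : ℝ) 1, r ^ ((α₂ : ℝ) + 1) * Real.exp (-2 / r))⁻¹ :=
      one_le_inv_iff₀.mpr ⟨hIpos, hIle⟩
    calc ‖a (0, α₂)‖ ≤ M := habs
      _ = 1 * 1 * M := by ring
      _ ≤ 1 * (∫ r in Set.Ioc (0 : ℝ) 1, r ^ ((α₂ : ℝ) + 1) * Real.exp (-2 / r))⁻¹ * M := by
          have := mul_le_mul_of_nonneg_right hinv hM0
          calc (1:ℝ) * 1 * M = 1 * M := by ring
            _ ≤ (∫ r in Set.Ioc (0 : ℝ) 1, r ^ ((α₂ : ℝ) + 1) * Real.exp (-2 / r))⁻¹ * M := this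
            _ = 1 * (∫ r in Set.Ioc (0 : ℝ) 1, r ^ ((α₂ : ℝ) + 1) * Real.exp (-2 / r))⁻¹ * M := by
                ring
  · -- negative case : coefficient vanishes
    have hk : (-α₂).toNat ≠ 0 := by omega
    have hle : ∀ r ∈ Set.Ioo (0:ℝ) 1, ‖a (0, α₂)‖ ≤ M * r ^ (-α₂).toNat := by
      intro r hr
      have h0 : (0:ℝ) < r := hr.1
      have heq : r ^ (-α₂) = (r:ℝ) ^ (-α₂).toNat := by
        rw [← zpow_natCast, Int.toNat_of_nonneg (by omega)]
      calc ‖a (0, α₂)‖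
          = ‖a (0, α₂)‖ * r ^ α₂ * r ^ (-α₂) := by
            rw [mul_assoc, ← zpow_add₀ h0.ne', add_neg_cancel, zpow_zero, mul_one]
        _ ≤ M * r ^ (-α₂) := mul_le_mul_of_nonneg_right (hcb r h0 hr.2) (zpow_nonneg h0.le _)
        _ = M * r ^ (-α₂).toNat := by rw [heq]
    have ht : Filter.Tendsto (fun r : ℝ => M * r ^ (-α₂).toNat)
        (nhdsWithin 0 (Set.Ioi 0)) (nhds 0) := by
      have hc : Filter.Tendsto (fun r : ℝ => M * r ^ (-α₂).toNat) (nhds 0)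
          (nhds (M * (0:ℝ) ^ (-α₂).toNat)) :=
        ((continuous_const.mul (continuous_pow _)).tendsto 0)
      rw [zero_pow hk, mul_zero] at hc
      exact hc.mono_left nhdsWithin_le_nhds
    have hz : ‖a (0, α₂)‖ ≤ 0 := by
      refine ge_of_tendsto ht ?_
      filter_upwards [Ioo_mem_nhdsGT
        (by norm_num : (0:ℝ) < 1)] with r hr
      exact hle r hr
    have : ‖a (0, α₂)‖ = 0 := le_antisymm hz (norm_nonneg _)
    rw [this]
    have hIn := Iint_nonneg ((α₂ : ℝ) + 1)
    positivity
end
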